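/- arXiv:math/0006020 — 8 statements merged into one kernel-verified Lean document; each statement's English description precedes it below -/
import Mathlib

section
/- Let A be an algebra over a field k, let ρ ∈ A ⊗ A be invertible, and let t_d, t_u be commuting algebra automorphisms of A such that (A, ρ, t_d, t_u) is an oriented quantum algebra, i.e. (1) (1_A ⊗ t_u)(ρ) and (t_d ⊗ 1_A)(ρ⁻¹) are inverses in A ⊗ A^{op}, (2) ρ = (t_d ⊗ t_d)(ρ) = (t_u ⊗ t_u)(ρ), and (3) ρ satisfies the quantum Yang–Baxter equation ρ₁₂ρ₁₃ρ₂₃ = ρ₂₃ρ₁₃ρ₁₂. Then (A, ρ, t_u ∘ t_d, id_A) and (A, ρ, id_A, t_d ∘ t_u) are also oriented quantum algebras. -/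
open TensorProduct

noncomputable section

variable (k : Type*) [Field k] (A : Type*) [Ring A] [Algebra k A]

/-- The linear map `A ⊗ A → A ⊗ Aᵐᵒᵖ` used to interpret elements in `A ⊗ Aᵒᵖ`. -/
def toOpTensor : A ⊗[k] A →ₗ[k] A ⊗[k] Aᵐᵒᵖ :=
  TensorProduct.map LinearMap.id (MulOpposite.opLinearEquiv k).toLinearMap

/-- `ρ ↦ ρ₁₂` in `A ⊗ (A ⊗ A)`. -/
def rho12 : A ⊗[k] A →ₐ[k] A ⊗[k] (A ⊗[k] A) :=
  Algebra.TensorProduct.map (AlgHom.id k A) Algebra.TensorProduct.includeLeft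

/-- `ρ ↦ ρ₁₃`. -/
def rho13 : A ⊗[k] A →ₐ[k] A ⊗[k] (A ⊗[k] A) :=
  Algebra.TensorProduct.map (AlgHom.id k A) Algebra.TensorProduct.includeRight

/-- `ρ ↦ ρ₂₃`. -/
def rho23 : A ⊗[k] A →ₐ[k] A ⊗[k] (A ⊗[k] A) :=
  Algebra.TensorProduct.includeRight

/-- The quantum Yang–Baxter equation. -/
def YangBaxter (ρ : A ⊗[k] A) : Prop :=
  rho12 k A ρ * rho13 k A ρ * rho23 k A ρ = rho23 k A ρ * rho13 k A ρ * rho12 k A ρ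

/-- An oriented quantum algebra structure `(A, ρ, t_d, t_u)` (with `ρinv` the inverse of `ρ`). -/
structure OrientedQA (ρ ρinv : A ⊗[k] A) (td tu : A →ₗ[k] A) : Prop where
  td_bij : Function.Bijective td
  tu_bij : Function.Bijective tu
  td_one : td 1 = 1
  td_mul : ∀ a b : A, td (a * b) = td a * td b
  tu_one : tu 1 = 1
  tu_mul : ∀ a b : A, tu (a * b) = tu a * tu b
  comm : ∀ a : A, td (tu a) = tu (td a)
  mul_inv : ρ * ρinv = 1
  inv_mul : ρinv * ρ = 1
  qa1_left : toOpTensor k A (TensorProduct.map LinearMap.id tu ρ) *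
      toOpTensor k A (TensorProduct.map td LinearMap.id ρinv) = 1
  qa1_right : toOpTensor k A (TensorProduct.map td LinearMap.id ρinv) *
      toOpTensor k A (TensorProduct.map LinearMap.id tu ρ) = 1
  qa2_d : TensorProduct.map td td ρ = ρ
  qa2_u : TensorProduct.map tu tu ρ = ρ
  qa3 : YangBaxter k A ρ

/-- Left contraction `(u* ⊗ 1)(ρ)`. -/
def contractL (f : Module.Dual k A) : A ⊗[k] A →ₗ[k] A :=
  (TensorProduct.lid k A).toLinearMap ∘ₗ TensorProduct.map f LinearMap.id

/-- Right contraction `(1 ⊗ v*)(ρ)`. -/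
def contractR (g : Module.Dual k A) : A ⊗[k] A →ₗ[k] A :=
  (TensorProduct.rid k A).toLinearMap ∘ₗ TensorProduct.map LinearMap.id g

/-- The set `A_(ρ)` of all `(u* ⊗ 1)(ρ) + (1 ⊗ v*)(ρ)`. -/
def contractSet (ρ : A ⊗[k] A) : Set A :=
  {x | ∃ f g : Module.Dual k A, x = contractL k A f ρ + contractR k A g ρ}

/-- A quantum algebra `(A, ρ, s)`, with `s` an algebra anti-automorphism. -/
structure QuantumAlgebra (ρ ρinv : A ⊗[k] A) (s : A ≃ₗ[k] A) : Prop where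
  s_one : s 1 = 1
  s_anti : ∀ a b : A, s (a * b) = s b * s a
  mul_inv : ρ * ρinv = 1
  inv_mul : ρinv * ρ = 1
  QA1 : ρinv = TensorProduct.map s.toLinearMap LinearMap.id ρ
  QA2 : TensorProduct.map s.toLinearMap s.toLinearMap ρ = ρ
  QA3 : YangBaxter k A ρ

end


open TensorProduct in
private lemma map_map_apply {k : Type*} [Field k] {A : Type*} [Ring A] [Algebra k A]
    (f₂ f₁ g₂ g₁ : A →ₗ[k] A) (x : A ⊗[k] A) :
    TensorProduct.map f₂ g₂ (TensorProduct.map f₁ g₁ x) =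
      TensorProduct.map (f₂ ∘ₗ f₁) (g₂ ∘ₗ g₁) x := by
  rw [TensorProduct.map_comp]; rfl

open TensorProduct in
private lemma key_op {k : Type*} [Field k] {A : Type*} [Ring A] [Algebra k A]
    (φ ψ : A →ₐ[k] A) (f g : A →ₗ[k] A) (x : A ⊗[k] A) :
    (Algebra.TensorProduct.map φ (AlgHom.op ψ)) (toOpTensor k A (TensorProduct.map f g x))
      = toOpTensor k A (TensorProduct.map (φ.toLinearMap ∘ₗ f) (ψ.toLinearMap ∘ₗ g) x) := by
  induction x using TensorProduct.induction_on with
  | zero => simp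
  | tmul a b => simp [toOpTensor, AlgHom.op]
  | add x y hx hy => simp only [map_add, hx, hy]

open TensorProduct in
private lemma algmap_apply {k : Type*} [Field k] {A : Type*} [Ring A] [Algebra k A]
    (φ ψ : A →ₐ[k] A) (x : A ⊗[k] A) :
    (Algebra.TensorProduct.map φ ψ) x = TensorProduct.map φ.toLinearMap ψ.toLinearMap x := by
  induction x using TensorProduct.induction_on with
  | zero => simp
  | tmul a b => simp
  | add x y hx hy => simp only [map_add, hx, hy]

open TensorProduct in
/-- an oriented quantum algebra `(A, ρ, t_d, t_u)` gives rise to the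
oriented quantum algebras `(A, ρ, t_u ∘ t_d, 1_A)` and `(A, ρ, 1_A, t_d ∘ t_u)`. -/
theorem toStandard {k : Type*} [Field k] {A : Type*} [Ring A] [Algebra k A]
    (ρ ρinv : A ⊗[k] A) (td tu : A →ₗ[k] A)
    (h : OrientedQA k A ρ ρinv td tu) :
    OrientedQA k A ρ ρinv (tu ∘ₗ td) LinearMap.id ∧
      OrientedQA k A ρ ρinv LinearMap.id (td ∘ₗ tu) := by
  obtain ⟨td_bij, tu_bij, td_one, td_mul, tu_one, tu_mul, hcomm, mul_inv, inv_mul,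
    qa1l, qa1r, qa2d, qa2u, qa3⟩ := h
  -- algebra automorphisms
  let etd : A ≃ₐ[k] A :=
    AlgEquiv.ofLinearEquiv (LinearEquiv.ofBijective td td_bij) td_one td_mul
  let etu : A ≃ₐ[k] A :=
    AlgEquiv.ofLinearEquiv (LinearEquiv.ofBijective tu tu_bij) tu_one tu_mul
  have hetd : ∀ a : A, etd a = td a := fun _ => rfl
  have hetu : ∀ a : A, etu a = tu a := fun _ => rfl
  have hetd_lin : etd.toLinearMap = td := by ext a; exact hetd a
  have hetu_lin : etu.toLinearMap = tu := by ext a; exact hetu a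
  have hetd_inv : etd.toLinearMap ∘ₗ etd.symm.toLinearMap = LinearMap.id := by
    ext a; simp
  have hetu_inv : etu.toLinearMap ∘ₗ etu.symm.toLinearMap = LinearMap.id := by
    ext a; simp
  have hetd_inv' : etd.symm.toLinearMap ∘ₗ td = LinearMap.id := by
    ext a; simp [← hetd a]
  have hetu_inv' : etu.symm.toLinearMap ∘ₗ tu = LinearMap.id := by
    ext a; simp [← hetu a]
  -- ρinv is invariant
  have finv : ∀ e : A ≃ₐ[k] A, TensorProduct.map e.toLinearMap e.toLinearMap ρ = ρ →
      TensorProduct.map e.toLinearMap e.toLinearMap ρinv = ρinv := by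
    intro e hρ
    set m := Algebra.TensorProduct.map e.toAlgHom e.toAlgHom with hm
    have h1 : m ρ * m ρinv = 1 := by rw [← map_mul, mul_inv, map_one]
    have h2 : m ρ = ρ := by rw [hm, algmap_apply]; exact hρ
    have : ρ * m ρinv = 1 := by rw [← h2]; exact h1
    calc TensorProduct.map e.toLinearMap e.toLinearMap ρinv
        = m ρinv := by rw [hm, algmap_apply, AlgEquiv.toAlgHom_toLinearMap]
      _ = (ρinv * ρ) * m ρinv := by rw [inv_mul, one_mul]
      _ = ρinv * (ρ * m ρinv) := by rw [mul_assoc]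
      _ = ρinv := by rw [this, mul_one]
  have qa2d' : TensorProduct.map etd.toLinearMap etd.toLinearMap ρ = ρ := by
    rw [hetd_lin]; exact qa2d
  have qa2u' : TensorProduct.map etu.toLinearMap etu.toLinearMap ρ = ρ := by
    rw [hetu_lin]; exact qa2u
  have finv_d := finv etd qa2d'
  have finv_u := finv etu qa2u'
  -- F5 : map id tu ρ = map etu.symm id ρ
  have F5 : TensorProduct.map LinearMap.id tu ρ =
      TensorProduct.map etu.symm.toLinearMap LinearMap.id ρ := by
    calc TensorProduct.map LinearMap.id tu ρ
        = TensorProduct.map (etu.symm.toLinearMap ∘ₗ tu) (LinearMap.id ∘ₗ tu) ρ := by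
          rw [hetu_inv']; rfl
      _ = TensorProduct.map etu.symm.toLinearMap LinearMap.id
            (TensorProduct.map tu tu ρ) := by rw [map_map_apply]
      _ = _ := by rw [qa2u]
  have hinv2 : TensorProduct.map etd.symm.toLinearMap etd.symm.toLinearMap ρinv
      = ρinv := by
    conv_lhs => rw [← finv_d]
    rw [map_map_apply,
      show etd.symm.toLinearMap ∘ₗ etd.toLinearMap = LinearMap.id from by ext a; simp,
      TensorProduct.map_id]
    rfl
  have htd_id : td ∘ₗ etd.symm.toLinearMap = LinearMap.id := by
    rw [← hetd_lin]; exact hetd_inv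
  have htu_id : tu ∘ₗ etu.symm.toLinearMap = LinearMap.id := by
    rw [← hetu_lin]; exact hetu_inv
  -- F6 : map td id ρinv = map id etd.symm ρinv
  have F6 : TensorProduct.map td LinearMap.id ρinv =
      TensorProduct.map LinearMap.id etd.symm.toLinearMap ρinv := by
    conv_lhs => rw [← hinv2]
    rw [map_map_apply, htd_id, LinearMap.id_comp]
  -- the hom Ψu = etu ⊗ 1 on A ⊗ Aᵒᵖ
  have Ψu := Algebra.TensorProduct.map etu.toAlgHom (AlgHom.op (AlgHom.id k A))
  -- qa1 for the first structure
  have keyu : ∀ (f g : A →ₗ[k] A) (x : A ⊗[k] A),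
      (Algebra.TensorProduct.map etu.toAlgHom (AlgHom.op (AlgHom.id k A)))
        (toOpTensor k A (TensorProduct.map f g x))
      = toOpTensor k A (TensorProduct.map (tu ∘ₗ f) g x) := by
    intro f g x
    have h1 : (etu.toAlgHom.toLinearMap : A →ₗ[k] A) ∘ₗ f = tu ∘ₗ f := by
      ext a; exact hetu (f a)
    have h2 : ((AlgHom.id k A).toLinearMap : A →ₗ[k] A) ∘ₗ g = g := by ext a; rfl
    rw [key_op, h1, h2]
  have keyd : ∀ (f g : A →ₗ[k] A) (x : A ⊗[k] A),
      (Algebra.TensorProduct.map (AlgHom.id k A) (AlgHom.op etd.toAlgHom))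
        (toOpTensor k A (TensorProduct.map f g x))
      = toOpTensor k A (TensorProduct.map f (td ∘ₗ g) x) := by
    intro f g x
    have h1 : ((AlgHom.id k A).toLinearMap : A →ₗ[k] A) ∘ₗ f = f := by ext a; rfl
    have h2 : (etd.toAlgHom.toLinearMap : A →ₗ[k] A) ∘ₗ g = td ∘ₗ g := by
      ext a; exact hetd (g a)
    rw [key_op, h1, h2]
  have qa1l₁ : toOpTensor k A (TensorProduct.map LinearMap.id LinearMap.id ρ) *
      toOpTensor k A (TensorProduct.map (tu ∘ₗ td) LinearMap.id ρinv) = 1 := by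
    have := congrArg (Algebra.TensorProduct.map etu.toAlgHom (AlgHom.op (AlgHom.id k A)))
      qa1l
    rw [map_mul, map_one, F5, keyu, keyu, htu_id] at this
    exact this
  have qa1r₁ : toOpTensor k A (TensorProduct.map (tu ∘ₗ td) LinearMap.id ρinv) *
      toOpTensor k A (TensorProduct.map LinearMap.id LinearMap.id ρ) = 1 := by
    have := congrArg (Algebra.TensorProduct.map etu.toAlgHom (AlgHom.op (AlgHom.id k A)))
      qa1r
    rw [map_mul, map_one, F5, keyu, keyu, htu_id] at this
    exact this
  have qa1l₂ : toOpTensor k A (TensorProduct.map LinearMap.id (td ∘ₗ tu) ρ) *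
      toOpTensor k A (TensorProduct.map LinearMap.id LinearMap.id ρinv) = 1 := by
    have := congrArg (Algebra.TensorProduct.map (AlgHom.id k A) (AlgHom.op etd.toAlgHom))
      qa1l
    rw [map_mul, map_one, F6, keyd, keyd] at this
    rwa [htd_id] at this
  have qa1r₂ : toOpTensor k A (TensorProduct.map LinearMap.id LinearMap.id ρinv) *
      toOpTensor k A (TensorProduct.map LinearMap.id (td ∘ₗ tu) ρ) = 1 := by
    have := congrArg (Algebra.TensorProduct.map (AlgHom.id k A) (AlgHom.op etd.toAlgHom))
      qa1r
    rw [map_mul, map_one, F6, keyd, keyd] at this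
    rwa [htd_id] at this
  have qa2comp : TensorProduct.map (tu ∘ₗ td) (tu ∘ₗ td) ρ = ρ := by
    rw [← map_map_apply, qa2d, qa2u]
  have qa2comp' : TensorProduct.map (td ∘ₗ tu) (td ∘ₗ tu) ρ = ρ := by
    rw [← map_map_apply, qa2u, qa2d]
  have qa2id : TensorProduct.map (LinearMap.id : A →ₗ[k] A) LinearMap.id ρ = ρ := by
    rw [TensorProduct.map_id]; rfl
  refine ⟨⟨tu_bij.comp td_bij, Function.bijective_id, ?_, ?_, rfl,
      fun _ _ => rfl, fun _ => rfl, mul_inv, inv_mul, ?_, ?_, qa2comp, qa2id, qa3⟩,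
    ⟨Function.bijective_id, (td_bij.comp tu_bij), rfl, fun _ _ => rfl, ?_, ?_,
      fun _ => rfl, mul_inv, inv_mul, qa1l₂, qa1r₂, qa2id, qa2comp', qa3⟩⟩
  · show tu (td 1) = 1; rw [td_one, tu_one]
  · intro a b; show tu (td (a*b)) = _; rw [td_mul, tu_mul]; rfl
  · exact qa1l₁
  · exact qa1r₁
  · show td (tu 1) = 1; rw [tu_one, td_one]
  · intro a b; show td (tu (a*b)) = _; rw [tu_mul, td_mul]; rfl
end

section
/- Let (A, ρ, t_d, t_u) be an oriented quantum algebra over a field k. Then there is a unique minimal oriented quantum subalgebra (A_ρ, ρ, t_d|_{A_ρ}, t_u|_{A_ρ}), where A_ρ is the subalgebra of A generated by A_(ρ) + A_(ρ⁻¹). Furthermore, if (B, ρ, t_d|_B, t_u|_B) is any oriented quantum subalgebra of (A, ρ, t_d, t_u) then A_ρ ⊆ B. -/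
open TensorProduct

open TensorProduct

noncomputable section

variable (k : Type*) [Field k] (A : Type*) [Ring A] [Algebra k A]

/-- `x` lies in `B ⊗ B` viewed inside `A ⊗ A`. -/
def memTensorSq (B : Subalgebra k A) (x : A ⊗[k] A) : Prop :=
  x ∈ LinearMap.range
    (TensorProduct.map (Subalgebra.toSubmodule B).subtype (Subalgebra.toSubmodule B).subtype)

/-- `B` is an oriented quantum subalgebra of `(A, ρ, t_d, t_u)`: `ρ, ρ⁻¹ ∈ B ⊗ B`
and `t_d(B) = t_u(B) = B`. -/
def IsOQSub (ρ ρinv : A ⊗[k] A) (td tu : A →ₗ[k] A) (B : Subalgebra k A) : Prop :=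
  memTensorSq k A B ρ ∧ memTensorSq k A B ρinv ∧
    td '' (B : Set A) = (B : Set A) ∧ tu '' (B : Set A) = (B : Set A)


section Aux

variable {k : Type*} [Field k] {M N : Type*} [AddCommGroup M] [Module k M]
  [AddCommGroup N] [Module k N]

/-- Reduction step: if the left family is dependent, the representation can be shortened. -/
lemma reduce_step {n : ℕ} (a : Fin (n + 1) → M) (b : Fin (n + 1) → N)
    (ha : ¬ LinearIndependent k a) :
    ∃ (a' : Fin n → M) (b' : Fin n → N),
      (∑ i, a' i ⊗ₜ[k] b' i) = ∑ i, a i ⊗ₜ[k] b i := by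
  obtain ⟨g, hg, j, hgj⟩ := Fintype.not_linearIndependent_iff.mp ha
  refine ⟨fun i => a (j.succAbove i),
    fun i => b (j.succAbove i) - ((g j)⁻¹ * g (j.succAbove i)) • b j, ?_⟩
  rw [Fin.sum_univ_succAbove (fun i => a i ⊗ₜ[k] b i) j]
  have hsum : g j • a j + ∑ i : Fin n, g (j.succAbove i) • a (j.succAbove i) = 0 := by
    rw [← Fin.sum_univ_succAbove (fun i => g i • a i) j]; exact hg
  have haj : a j = ∑ i : Fin n, (-((g j)⁻¹ * g (j.succAbove i))) • a (j.succAbove i) := by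
    have h1 : g j • a j = - ∑ i : Fin n, g (j.succAbove i) • a (j.succAbove i) :=
      eq_neg_of_add_eq_zero_left hsum
    have h2 : a j = (g j)⁻¹ • (g j • a j) := by
      rw [smul_smul, inv_mul_cancel₀ hgj, one_smul]
    rw [h2, h1, smul_neg, Finset.smul_sum, ← Finset.sum_neg_distrib]
    refine Finset.sum_congr rfl fun i _ => ?_
    rw [smul_smul, neg_smul]
  calc (∑ i : Fin n, a (j.succAbove i) ⊗ₜ[k]
        (b (j.succAbove i) - ((g j)⁻¹ * g (j.succAbove i)) • b j))
      = (∑ i : Fin n, a (j.succAbove i) ⊗ₜ[k] b (j.succAbove i))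
        + ∑ i : Fin n, (-((g j)⁻¹ * g (j.succAbove i))) • a (j.succAbove i) ⊗ₜ[k] b j := by
        rw [← Finset.sum_add_distrib]
        refine Finset.sum_congr rfl fun i _ => ?_
        rw [tmul_sub, tmul_smul, sub_eq_add_neg, ← neg_smul]
    _ = a j ⊗ₜ[k] b j + ∑ i : Fin n, a (j.succAbove i) ⊗ₜ[k] b (j.succAbove i) := by
        rw [add_comm]
        congr 1
        rw [haj, sum_tmul]
        refine Finset.sum_congr rfl fun i _ => ?_
        rw [smul_tmul']

lemma exists_indep_rep_aux :
    ∀ (n : ℕ) (a : Fin n → M) (b : Fin n → N),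
      ∃ (m : ℕ) (a' : Fin m → M) (b' : Fin m → N),
        LinearIndependent k a' ∧ LinearIndependent k b' ∧
          (∑ i, a' i ⊗ₜ[k] b' i) = ∑ i, a i ⊗ₜ[k] b i := by
  intro n
  induction n using Nat.strong_induction_on with
  | _ n ih =>
    intro a b
    by_cases ha : LinearIndependent k a
    · by_cases hb : LinearIndependent k b
      · exact ⟨n, a, b, ha, hb, rfl⟩
      · rcases n with _ | n
        · exact absurd linearIndependent_empty_type hb
        · obtain ⟨b', a', hs⟩ := reduce_step b a hb
          obtain ⟨m, a'', b'', ha'', hb'', hs'⟩ := ih n (Nat.lt_succ_self n) a' b'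
          refine ⟨m, a'', b'', ha'', hb'', ?_⟩
          have := congrArg (TensorProduct.comm k N M) hs
          rw [map_sum, map_sum] at this
          simp only [TensorProduct.comm_tmul] at this
          exact hs'.trans this
    · rcases n with _ | n
      · exact absurd linearIndependent_empty_type ha
      · obtain ⟨a', b', hs⟩ := reduce_step a b ha
        obtain ⟨m, a'', b'', ha'', hb'', hs'⟩ := ih n (Nat.lt_succ_self n) a' b'
        exact ⟨m, a'', b'', ha'', hb'', hs'.trans hs⟩

lemma exists_indep_rep (x : M ⊗[k] N) :
    ∃ (n : ℕ) (a : Fin n → M) (b : Fin n → N),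
      LinearIndependent k a ∧ LinearIndependent k b ∧ x = ∑ i, a i ⊗ₜ[k] b i := by
  obtain ⟨S, hS⟩ := TensorProduct.exists_finset x
  have : x = ∑ i : Fin S.card, (S.equivFin.symm i).1.1 ⊗ₜ[k] (S.equivFin.symm i).1.2 := by
    have e1 : ∑ p ∈ S, p.1 ⊗ₜ[k] p.2 = ∑ p : {x // x ∈ S}, (p : M × N).1 ⊗ₜ[k] (p : M × N).2 := by
      rw [← Finset.sum_attach S (fun p => p.1 ⊗ₜ[k] p.2), ← Finset.univ_eq_attach]
    have e2 : ∑ p : {x // x ∈ S}, (p : M × N).1 ⊗ₜ[k] (p : M × N).2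
        = ∑ i : Fin S.card, (S.equivFin.symm i).1.1 ⊗ₜ[k] (S.equivFin.symm i).1.2 :=
      (Equiv.sum_comp S.equivFin.symm
        (fun p : {x // x ∈ S} => (p : M × N).1 ⊗ₜ[k] (p : M × N).2)).symm
    rw [hS, e1, e2]
  obtain ⟨m, a', b', h1, h2, h3⟩ := exists_indep_rep_aux (k := k) S.card
    (fun i => (S.equivFin.symm i).1.1) (fun i => (S.equivFin.symm i).1.2)
  exact ⟨m, a', b', h1, h2, this.trans h3.symm⟩

lemma exists_dual_family {n : ℕ} {v : Fin n → M} (hv : LinearIndependent k v) (i : Fin n) :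
    ∃ f : Module.Dual k M, ∀ j, f (v j) = if j = i then 1 else 0 := by
  have hnm : v i ∉ Submodule.span k (v '' {i}ᶜ) := hv.notMem_span_image (by simp)
  obtain ⟨f, hf0, hfbot⟩ := Submodule.exists_dual_map_eq_bot_of_notMem hnm inferInstance
  refine ⟨(f (v i))⁻¹ • f, fun j => ?_⟩
  by_cases hji : j = i
  · subst hji; simp [inv_mul_cancel₀ hf0]
  · have hmem : v j ∈ Submodule.span k (v '' {i}ᶜ) :=
      Submodule.subset_span ⟨j, by simp [hji], rfl⟩
    have : f (v j) = 0 := by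
      have h2 : f (v j) ∈ Submodule.map f (Submodule.span k (v '' {i}ᶜ)) :=
        Submodule.mem_map_of_mem hmem
      rw [hfbot] at h2
      simpa using h2
    simp [this, hji]

end Aux

section Main

variable {k : Type*} [Field k] {A : Type*} [Ring A] [Algebra k A]

lemma contractL_tmul (f : Module.Dual k A) (a b : A) :
    contractL k A f (a ⊗ₜ[k] b) = f a • b := by
  simp [contractL]

lemma contractR_tmul (g : Module.Dual k A) (a b : A) :
    contractR k A g (a ⊗ₜ[k] b) = g b • a := by
  simp [contractR]

lemma contractL_zero (x : A ⊗[k] A) : contractL k A 0 x = 0 := by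
  induction x using TensorProduct.induction_on with
  | zero => simp
  | tmul a b => simp [contractL_tmul]
  | add u v hu hv => rw [map_add, hu, hv, add_zero]

lemma contractR_zero (x : A ⊗[k] A) : contractR k A 0 x = 0 := by
  induction x using TensorProduct.induction_on with
  | zero => simp
  | tmul a b => simp [contractR_tmul]
  | add u v hu hv => rw [map_add, hu, hv, add_zero]

lemma contractL_mem_contractSet (f : Module.Dual k A) (x : A ⊗[k] A) :
    contractL k A f x ∈ contractSet k A x :=
  ⟨f, 0, by rw [contractR_zero, add_zero]⟩

lemma contractR_mem_contractSet (g : Module.Dual k A) (x : A ⊗[k] A) :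
    contractR k A g x ∈ contractSet k A x :=
  ⟨0, g, by rw [contractL_zero, zero_add]⟩

/-- Key lemma: if all contractions of `x` lie in a submodule `E`, then
`x` lies in the image of `E ⊗ E`. -/
lemma mem_range_map_of_contractSet_subset (x : A ⊗[k] A) (E : Submodule k A)
    (hs : contractSet k A x ⊆ (E : Set A)) :
    x ∈ LinearMap.range (TensorProduct.map E.subtype E.subtype) := by
  obtain ⟨n, a, b, ha, hb, rfl⟩ := exists_indep_rep (k := k) x
  rw [TensorProduct.range_map_eq_span_tmul]
  have haE : ∀ i, a i ∈ E := by
    intro i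
    obtain ⟨g, hg⟩ := exists_dual_family hb i
    have hc : contractR k A g (∑ j, a j ⊗ₜ[k] b j) = a i := by
      rw [map_sum]
      simp [contractR_tmul, hg, ite_smul]
    exact hc ▸ hs (contractR_mem_contractSet g _)
  have hbE : ∀ i, b i ∈ E := by
    intro i
    obtain ⟨f, hf⟩ := exists_dual_family ha i
    have hc : contractL k A f (∑ j, a j ⊗ₜ[k] b j) = b i := by
      rw [map_sum]
      simp [contractL_tmul, hf, ite_smul]
    exact hc ▸ hs (contractL_mem_contractSet f _)
  exact Submodule.sum_mem _ fun i _ =>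
    Submodule.subset_span ⟨⟨a i, haE i⟩, ⟨b i, hbE i⟩, rfl⟩

lemma contractL_equiv_apply (e : A ≃ₗ[k] A) (f : Module.Dual k A) (y : A ⊗[k] A) :
    e (contractL k A f y) = contractL k A (f ∘ₗ e.symm.toLinearMap)
      (TensorProduct.map e.toLinearMap e.toLinearMap y) := by
  induction y using TensorProduct.induction_on with
  | zero => simp
  | tmul a b => simp [contractL_tmul]
  | add u v hu hv => simp only [map_add, hu, hv]

lemma contractR_equiv_apply (e : A ≃ₗ[k] A) (g : Module.Dual k A) (y : A ⊗[k] A) :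
    e (contractR k A g y) = contractR k A (g ∘ₗ e.symm.toLinearMap)
      (TensorProduct.map e.toLinearMap e.toLinearMap y) := by
  induction y using TensorProduct.induction_on with
  | zero => simp
  | tmul a b => simp [contractR_tmul]
  | add u v hu hv => simp only [map_add, hu, hv]

lemma image_contractSet_subset (e : A ≃ₗ[k] A) {x : A ⊗[k] A}
    (hx : TensorProduct.map e.toLinearMap e.toLinearMap x = x) :
    e '' contractSet k A x ⊆ contractSet k A x := by
  rintro _ ⟨y, ⟨f, g, rfl⟩, rfl⟩
  exact ⟨f ∘ₗ e.symm.toLinearMap, g ∘ₗ e.symm.toLinearMap, by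
    rw [map_add, contractL_equiv_apply, contractR_equiv_apply, hx]⟩

lemma image_contractSet_eq (e : A ≃ₗ[k] A) {x : A ⊗[k] A}
    (hx : TensorProduct.map e.toLinearMap e.toLinearMap x = x) :
    e '' contractSet k A x = contractSet k A x := by
  have hinv : ∀ y : A ⊗[k] A, TensorProduct.map e.symm.toLinearMap e.symm.toLinearMap
      (TensorProduct.map e.toLinearMap e.toLinearMap y) = y := by
    intro y
    induction y using TensorProduct.induction_on with
    | zero => simp
    | tmul a b => simp
    | add u v hu hv => simp only [map_add, hu, hv]
  have hsymm : TensorProduct.map e.symm.toLinearMap e.symm.toLinearMap x = x := by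
    conv_lhs => rw [← hx]
    exact hinv x
  refine Set.Subset.antisymm (image_contractSet_subset e hx) fun y hy => ?_
  exact ⟨e.symm y, image_contractSet_subset e.symm hsymm ⟨y, hy, rfl⟩, e.apply_symm_apply y⟩

/-- An automorphism leaving `ρ` invariant leaves `A_ρ` invariant. -/
lemma image_adjoin_eq {t : A →ₗ[k] A} (hbij : Function.Bijective t) (hone : t 1 = 1)
    (hmul : ∀ a b, t (a * b) = t a * t b) {ρ ρinv : A ⊗[k] A}
    (hρ : TensorProduct.map t t ρ = ρ) (hmi : ρ * ρinv = 1) (him : ρinv * ρ = 1) :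
    t '' (Algebra.adjoin k (contractSet k A ρ ∪ contractSet k A ρinv) : Set A)
      = (Algebra.adjoin k (contractSet k A ρ ∪ contractSet k A ρinv) : Set A) := by
  let th : A →ₐ[k] A :=
    { toFun := t
      map_one' := hone
      map_mul' := hmul
      map_zero' := map_zero t
      map_add' := map_add t
      commutes' := fun c => by
        simp only [Algebra.algebraMap_eq_smul_one]
        show t (c • 1) = c • 1
        rw [map_smul, hone] }
  let te : A ≃ₗ[k] A := LinearEquiv.ofBijective t hbij
  have hte : te.toLinearMap = t := rfl
  have hρ' : TensorProduct.map te.toLinearMap te.toLinearMap ρ = ρ := by rw [hte]; exact hρ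
  -- invariance of ρinv
  have hth : ∀ y : A ⊗[k] A,
      Algebra.TensorProduct.map th th y = TensorProduct.map t t y := by
    intro y
    induction y using TensorProduct.induction_on with
    | zero => simp
    | tmul a b => rfl
    | add u v hu hv => simp only [map_add, hu, hv]
  have hρth : Algebra.TensorProduct.map th th ρ = ρ := (hth ρ).trans hρ
  have hρinv : TensorProduct.map t t ρinv = ρinv := by
    rw [← hth]
    calc Algebra.TensorProduct.map th th ρinv
        = Algebra.TensorProduct.map th th ρinv * (ρ * ρinv) := by rw [hmi, mul_one]
      _ = (Algebra.TensorProduct.map th th ρinv * Algebra.TensorProduct.map th th ρ) * ρinv := by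
          rw [hρth, mul_assoc]
      _ = Algebra.TensorProduct.map th th (ρinv * ρ) * ρinv := by rw [map_mul]
      _ = ρinv := by rw [him, map_one, one_mul]
  have hρinv' : TensorProduct.map te.toLinearMap te.toLinearMap ρinv = ρinv := by
    rw [hte]; exact hρinv
  have hS : t '' (contractSet k A ρ ∪ contractSet k A ρinv)
      = contractSet k A ρ ∪ contractSet k A ρinv := by
    have hcoe : ⇑te = ⇑t := rfl
    rw [Set.image_union, ← hcoe, image_contractSet_eq te hρ', image_contractSet_eq te hρinv']
  calc t '' (Algebra.adjoin k (contractSet k A ρ ∪ contractSet k A ρinv) : Set A)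
      = ((Algebra.adjoin k (contractSet k A ρ ∪ contractSet k A ρinv)).map th : Set A) := by
        rw [Subalgebra.coe_map]; rfl
    _ = (Algebra.adjoin k (th '' (contractSet k A ρ ∪ contractSet k A ρinv)) : Set A) := by
        rw [AlgHom.map_adjoin]
    _ = _ := by
        have : th '' (contractSet k A ρ ∪ contractSet k A ρinv)
            = contractSet k A ρ ∪ contractSet k A ρinv := hS
        rw [this]

lemma contract_mem_of_memTensorSq {B : Subalgebra k A} {x : A ⊗[k] A}
    (hx : memTensorSq k A B x) (f g : Module.Dual k A) :
    contractL k A f x + contractR k A g x ∈ B := by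
  obtain ⟨y, rfl⟩ := hx
  have : ∀ y : (Subalgebra.toSubmodule B : Submodule k A) ⊗[k]
      (Subalgebra.toSubmodule B : Submodule k A),
      contractL k A f (TensorProduct.map (Subalgebra.toSubmodule B).subtype
        (Subalgebra.toSubmodule B).subtype y) ∈ B ∧
      contractR k A g (TensorProduct.map (Subalgebra.toSubmodule B).subtype
        (Subalgebra.toSubmodule B).subtype y) ∈ B := by
    intro y
    induction y using TensorProduct.induction_on with
    | zero => simp only [map_zero]; exact ⟨Subalgebra.zero_mem B, Subalgebra.zero_mem B⟩
    | tmul a b =>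
        rw [TensorProduct.map_tmul]
        exact ⟨by rw [contractL_tmul]; exact Subalgebra.smul_mem B b.2 _,
          by rw [contractR_tmul]; exact Subalgebra.smul_mem B a.2 _⟩
    | add u v hu hv =>
        rw [map_add, map_add, map_add]
        exact ⟨Subalgebra.add_mem B hu.1 hv.1, Subalgebra.add_mem B hu.2 hv.2⟩
  exact Subalgebra.add_mem B (this y).1 (this y).2

end Main

/-- an oriented quantum algebra has a unique minimal oriented quantum
subalgebra, namely the subalgebra `A_ρ` generated by `A_(ρ) + A_(ρ⁻¹)`, and `A_ρ` is
contained in every oriented quantum subalgebra. -/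
theorem minimal_oriented_quantum_subalgebra {k : Type*} [Field k]
    {A : Type*} [Ring A] [Algebra k A]
    (ρ ρinv : A ⊗[k] A) (td tu : A →ₗ[k] A)
    (h : OrientedQA k A ρ ρinv td tu) :
    IsOQSub k A ρ ρinv td tu
        (Algebra.adjoin k (contractSet k A ρ ∪ contractSet k A ρinv)) ∧
      ∀ B : Subalgebra k A, IsOQSub k A ρ ρinv td tu B →
        Algebra.adjoin k (contractSet k A ρ ∪ contractSet k A ρinv) ≤ B := by
  constructor
  · refine ⟨?_, ?_, ?_, ?_⟩
    · exact mem_range_map_of_contractSet_subset ρ _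
        (fun x hx => Algebra.subset_adjoin (Set.mem_union_left _ hx))
    · exact mem_range_map_of_contractSet_subset ρinv _
        (fun x hx => Algebra.subset_adjoin (Set.mem_union_right _ hx))
    · exact image_adjoin_eq h.td_bij h.td_one h.td_mul h.qa2_d h.mul_inv h.inv_mul
    · exact image_adjoin_eq h.tu_bij h.tu_one h.tu_mul h.qa2_u h.mul_inv h.inv_mul
  · intro B hB
    refine Algebra.adjoin_le ?_
    rintro x (⟨f, g, rfl⟩ | ⟨f, g, rfl⟩)
    · exact contract_mem_of_memTensorSq hB.1 f g
    · exact contract_mem_of_memTensorSq hB.2.1 f g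

end
end

section
/- Let (A, ρ, s) be a quantum algebra over a field k, i.e. A an algebra, ρ ∈ A ⊗ A invertible, s: A → A^{op} an algebra isomorphism with ρ⁻¹ = (s ⊗ 1_A)(ρ), ρ = (s ⊗ s)(ρ), and ρ satisfying the quantum Yang–Baxter equation. Then (A, ρ, 1_A, s⁻²) is a standard oriented quantum algebra: in particular, (1_A ⊗ s⁻²)(ρ) and ρ⁻¹ are inverses in A ⊗ A^{op}. -/
open TensorProduct

open TensorProduct in
/-- a quantum algebra `(A, ρ, s)` gives rise to the standard oriented
quantum algebra `(A, ρ, 1_A, s⁻²)`; in particular `(1_A ⊗ s⁻²)(ρ)` and `ρ⁻¹` are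
inverses in `A ⊗ Aᵒᵖ`. -/
theorem quantumAlgebra_to_standard_oriented {k : Type*} [Field k]
    {A : Type*} [Ring A] [Algebra k A]
    (ρ ρinv : A ⊗[k] A) (s : A ≃ₗ[k] A)
    (h : QuantumAlgebra k A ρ ρinv s) :
    OrientedQA k A ρ ρinv LinearMap.id (s.symm.trans s.symm).toLinearMap := by
  obtain ⟨s1, santi, mi, im, qa1, qa2, qa3⟩ := h
  have s1' : s.symm 1 = 1 := by
    conv_lhs => rw [← s1]
    exact s.symm_apply_apply 1
  have santi' : ∀ a b : A, s.symm (a * b) = s.symm b * s.symm a := by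
    intro a b
    apply s.injective
    rw [santi, s.apply_symm_apply, s.apply_symm_apply, s.apply_symm_apply]
  -- (1 ⊗ s⁻¹) ρ = ρinv
  have hinv : TensorProduct.map LinearMap.id s.symm.toLinearMap ρ = ρinv := by
    rw [qa1]
    conv_lhs => rw [← qa2]
    rw [← LinearMap.comp_apply, ← TensorProduct.map_comp]
    have h1 : LinearMap.id ∘ₗ s.toLinearMap = s.toLinearMap := by ext x; simp
    have h2 : s.symm.toLinearMap ∘ₗ s.toLinearMap = (LinearMap.id : A →ₗ[k] A) := by
      ext x; simp
    rw [h1, h2]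
  have hsymm : TensorProduct.map s.symm.toLinearMap s.symm.toLinearMap ρ = ρ := by
    conv_lhs => rw [← qa2]
    rw [← LinearMap.comp_apply, ← TensorProduct.map_comp]
    have : s.symm.toLinearMap ∘ₗ s.toLinearMap = LinearMap.id := by ext x; simp
    rw [this, TensorProduct.map_id, LinearMap.id_apply]
  set Φ : A ⊗[k] A →ₗ[k] A ⊗[k] Aᵐᵒᵖ :=
    toOpTensor k A ∘ₗ TensorProduct.map LinearMap.id s.symm.toLinearMap with hΦ
  have Φtmul : ∀ a b : A, Φ (a ⊗ₜ b) = a ⊗ₜ MulOpposite.op (s.symm b) := by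
    intro a b; simp [hΦ, toOpTensor]
  have Φmul : ∀ x y : A ⊗[k] A, Φ (x * y) = Φ x * Φ y := by
    intro x y
    induction x using TensorProduct.induction_on with
    | zero => simp
    | add u v hu hv => simp only [add_mul, map_add, hu, hv]
    | tmul a b =>
      induction y using TensorProduct.induction_on with
      | zero => simp
      | add u v hu hv => simp only [mul_add, map_add, hu, hv]
      | tmul c d =>
        rw [Algebra.TensorProduct.tmul_mul_tmul, Φtmul, Φtmul, Φtmul,
          Algebra.TensorProduct.tmul_mul_tmul, santi', MulOpposite.op_mul]
  have Φone : Φ (1 : A ⊗[k] A) = 1 := by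
    rw [Algebra.TensorProduct.one_def, Φtmul, s1']
    rfl
  have hcomp : (s.symm.trans s.symm).toLinearMap
      = s.symm.toLinearMap ∘ₗ s.symm.toLinearMap := by ext x; simp
  have mapcomp : TensorProduct.map (LinearMap.id : A →ₗ[k] A)
      (s.symm.toLinearMap ∘ₗ s.symm.toLinearMap)
      = TensorProduct.map LinearMap.id s.symm.toLinearMap ∘ₗ
        TensorProduct.map LinearMap.id s.symm.toLinearMap := by
    rw [← TensorProduct.map_comp, LinearMap.id_comp]
  have key1 : toOpTensor k A (TensorProduct.map LinearMap.id
      (s.symm.trans s.symm).toLinearMap ρ) = Φ ρinv := by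
    rw [hΦ, LinearMap.comp_apply, ← hinv, hcomp, mapcomp, LinearMap.comp_apply]
  have key2 : toOpTensor k A (TensorProduct.map LinearMap.id LinearMap.id ρinv)
      = Φ ρ := by
    rw [TensorProduct.map_id, LinearMap.id_apply, hΦ, LinearMap.comp_apply, hinv]
  refine ⟨Function.bijective_id, (s.symm.trans s.symm).bijective, rfl, fun a b => rfl,
    ?_, ?_, fun a => rfl, mi, im, ?_, ?_, ?_, ?_, qa3⟩
  · show s.symm (s.symm 1) = 1
    rw [s1', s1']
  · intro a b
    simp only [LinearEquiv.coe_coe, LinearEquiv.trans_apply, santi']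
  · rw [key1, key2, ← Φmul, im, Φone]
  · rw [key1, key2, ← Φmul, mi, Φone]
  · rw [TensorProduct.map_id, LinearMap.id_apply]
  · have mapcomp2 : TensorProduct.map
        (s.symm.toLinearMap ∘ₗ s.symm.toLinearMap : A →ₗ[k] A)
        (s.symm.toLinearMap ∘ₗ s.symm.toLinearMap)
        = TensorProduct.map s.symm.toLinearMap s.symm.toLinearMap ∘ₗ
          TensorProduct.map s.symm.toLinearMap s.symm.toLinearMap := by
      rw [← TensorProduct.map_comp]
    rw [hcomp, mapcomp2, LinearMap.comp_apply, hsymm, hsymm]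
end

section
/- Let (A, ρ, s) be a minimal quantum algebra over a field k (i.e. A is generated as an algebra by A_(ρ)), and suppose (A, ρ, 1_A, t) is a standard oriented quantum algebra over k for some algebra automorphism t of A. Then t = s⁻². -/
open TensorProduct

section Aux

open TensorProduct

variable {k : Type*} [Field k] {A : Type*} [Ring A] [Algebra k A]

lemma mapmap {M₁ M₂ M₃ N₁ N₂ N₃ : Type*}
    [AddCommMonoid M₁] [AddCommMonoid M₂] [AddCommMonoid M₃]
    [AddCommMonoid N₁] [AddCommMonoid N₂] [AddCommMonoid N₃]
    [Module k M₁] [Module k M₂] [Module k M₃]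
    [Module k N₁] [Module k N₂] [Module k N₃]
    (f : M₂ →ₗ[k] M₃) (g : N₂ →ₗ[k] N₃) (f' : M₁ →ₗ[k] M₂) (g' : N₁ →ₗ[k] N₂)
    (x : M₁ ⊗[k] N₁) :
    TensorProduct.map f g (TensorProduct.map f' g' x)
      = TensorProduct.map (f ∘ₗ f') (g ∘ₗ g') x := by
  rw [TensorProduct.map_comp]; rfl

lemma toOpTensor_tmul (a b : A) :
    toOpTensor k A (a ⊗ₜ[k] b) = a ⊗ₜ[k] MulOpposite.op b := rfl

lemma toOpTensor_one : toOpTensor k A 1 = 1 := by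
  rw [Algebra.TensorProduct.one_def, toOpTensor_tmul]; rfl

lemma toOpTensor_inj : Function.Injective (toOpTensor k A) := by
  have hcomp : ((MulOpposite.opLinearEquiv k : A ≃ₗ[k] Aᵐᵒᵖ).symm.toLinearMap ∘ₗ
      (MulOpposite.opLinearEquiv k : A ≃ₗ[k] Aᵐᵒᵖ).toLinearMap) = (LinearMap.id : A →ₗ[k] A) := by
    ext a; rfl
  have h3 : ∀ z : A ⊗[k] A,
      TensorProduct.map LinearMap.id
        (MulOpposite.opLinearEquiv k : A ≃ₗ[k] Aᵐᵒᵖ).symm.toLinearMap (toOpTensor k A z) = z := by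
    intro z
    rw [toOpTensor, mapmap, hcomp, LinearMap.id_comp, TensorProduct.map_id, LinearMap.id_apply]
  intro x y hxy
  rw [← h3 x, ← h3 y, hxy]

lemma key_mul (v : A →ₗ[k] A) (hv : ∀ a b : A, v (a * b) = v b * v a)
    (x y : A ⊗[k] A) :
    toOpTensor k A (TensorProduct.map LinearMap.id (v ∘ₗ v) x) *
      toOpTensor k A (TensorProduct.map LinearMap.id v y)
      = toOpTensor k A (TensorProduct.map LinearMap.id v
          ((TensorProduct.map LinearMap.id v x) * y)) := by
  induction x using TensorProduct.induction_on with
  | zero => simp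
  | add x₁ x₂ hx₁ hx₂ => simp only [map_add, add_mul, hx₁, hx₂]
  | tmul a b =>
    induction y using TensorProduct.induction_on with
    | zero => simp
    | add y₁ y₂ hy₁ hy₂ => simp only [map_add, mul_add, hy₁, hy₂]
    | tmul c d =>
      simp only [TensorProduct.map_tmul, LinearMap.id_coe, id_eq, LinearMap.comp_apply,
        toOpTensor_tmul, Algebra.TensorProduct.tmul_mul_tmul]
      rw [hv, ← MulOpposite.op_mul]

lemma key_mul' (v : A →ₗ[k] A) (hv : ∀ a b : A, v (a * b) = v b * v a)
    (x y : A ⊗[k] A) :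
    toOpTensor k A (TensorProduct.map LinearMap.id v y) *
      toOpTensor k A (TensorProduct.map LinearMap.id (v ∘ₗ v) x)
      = toOpTensor k A (TensorProduct.map LinearMap.id v
          (y * (TensorProduct.map LinearMap.id v x))) := by
  induction x using TensorProduct.induction_on with
  | zero => simp
  | add x₁ x₂ hx₁ hx₂ => simp only [map_add, mul_add, hx₁, hx₂]
  | tmul a b =>
    induction y using TensorProduct.induction_on with
    | zero => simp
    | add y₁ y₂ hy₁ hy₂ => simp only [map_add, add_mul, hy₁, hy₂]
    | tmul c d =>
      simp only [TensorProduct.map_tmul, LinearMap.id_coe, id_eq, LinearMap.comp_apply,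
        toOpTensor_tmul, Algebra.TensorProduct.tmul_mul_tmul]
      rw [hv, ← MulOpposite.op_mul]

lemma contractL_map (f : Module.Dual k A) (u : A →ₗ[k] A) (x : A ⊗[k] A) :
    contractL k A f (TensorProduct.map LinearMap.id u x) = u (contractL k A f x) := by
  induction x using TensorProduct.induction_on with
  | zero => simp
  | add x₁ x₂ hx₁ hx₂ => simp [map_add, hx₁, hx₂]
  | tmul a b => simp [contractL, TensorProduct.map_tmul, map_smul]

lemma contractR_map (g : Module.Dual k A) (u : A →ₗ[k] A) (x : A ⊗[k] A) :
    contractR k A g (TensorProduct.map u LinearMap.id x) = u (contractR k A g x) := by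
  induction x using TensorProduct.induction_on with
  | zero => simp
  | add x₁ x₂ hx₁ hx₂ => simp [map_add, hx₁, hx₂]
  | tmul a b => simp [contractR, TensorProduct.map_tmul, map_smul]

end Aux

open TensorProduct in
/-- if `(A, ρ, s)` is a minimal quantum algebra (i.e. `A` is generated as
an algebra by `A_(ρ)`) and `(A, ρ, 1_A, t)` is a standard oriented quantum algebra,
then `t = s⁻²`. -/
theorem standard_auto_eq_antipode_sq_inv {k : Type*} [Field k]
    {A : Type*} [Ring A] [Algebra k A]
    (ρ ρinv : A ⊗[k] A) (s : A ≃ₗ[k] A)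
    (h : QuantumAlgebra k A ρ ρinv s)
    (hmin : Algebra.adjoin k (contractSet k A ρ) = ⊤)
    (t : A →ₗ[k] A)
    (ht : OrientedQA k A ρ ρinv LinearMap.id t) :
    t = (s.symm.trans s.symm).toLinearMap := by
  classical
  set v : A →ₗ[k] A := s.symm.toLinearMap with hv_def
  have hs1 : s.symm (1 : A) = 1 := by
    have h0 := congrArg (fun x => s.symm x) h.s_one
    simp only [LinearEquiv.symm_apply_apply] at h0
    exact h0.symm
  have hs_anti : ∀ a b : A, s.symm (a * b) = s.symm b * s.symm a := by
    intro a b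
    apply s.injective
    rw [h.s_anti]
    simp only [LinearEquiv.apply_symm_apply]
  have hv_anti : ∀ a b : A, v (a * b) = v b * v a := hs_anti
  have hvs : v ∘ₗ s.toLinearMap = LinearMap.id := by
    ext a; simp [hv_def]
  have hsv : s.toLinearMap ∘ₗ v = LinearMap.id := by
    ext a; simp [hv_def]
  have hwu : (s.toLinearMap ∘ₗ s.toLinearMap) ∘ₗ (v ∘ₗ v) = LinearMap.id := by
    ext a; simp [hv_def]
  have hss : TensorProduct.map v v ρ = ρ := by
    conv_lhs => rw [← h.QA2]
    rw [mapmap, hvs, TensorProduct.map_id, LinearMap.id_apply]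
  have hinv : ρinv = TensorProduct.map LinearMap.id v ρ := by
    rw [h.QA1]
    conv_lhs => rw [← hss]
    rw [mapmap, hsv, LinearMap.id_comp]
  have hone : TensorProduct.map LinearMap.id v (1 : A ⊗[k] A) = 1 := by
    rw [Algebra.TensorProduct.one_def, TensorProduct.map_tmul, LinearMap.id_apply]
    rw [hv_def]
    simp only [LinearEquiv.coe_coe]
    rw [hs1]
  have h1 : toOpTensor k A (TensorProduct.map LinearMap.id (v ∘ₗ v) ρ) *
      toOpTensor k A ρinv = 1 := by
    rw [hinv, key_mul v hv_anti, ← hinv, h.inv_mul, hone, toOpTensor_one]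
  have h2 : toOpTensor k A ρinv *
      toOpTensor k A (TensorProduct.map LinearMap.id (v ∘ₗ v) ρ) = 1 := by
    rw [hinv, key_mul' v hv_anti, ← hinv, h.mul_inv, hone, toOpTensor_one]
  have hqL := ht.qa1_left
  simp only [TensorProduct.map_id, LinearMap.id_apply] at hqL
  have hX : TensorProduct.map LinearMap.id t ρ
      = TensorProduct.map LinearMap.id (v ∘ₗ v) ρ :=
    toOpTensor_inj (left_inv_eq_right_inv hqL h2)
  -- first tensor factor version
  have step1 : TensorProduct.map t (v ∘ₗ v) ρ = ρ := by
    have h3 := congrArg (TensorProduct.map t LinearMap.id) hX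
    rw [mapmap, mapmap] at h3
    simp only [LinearMap.comp_id, LinearMap.id_comp] at h3
    rw [ht.qa2_u] at h3
    exact h3.symm
  have step2 : TensorProduct.map LinearMap.id (s.toLinearMap ∘ₗ s.toLinearMap) ρ
      = TensorProduct.map t LinearMap.id ρ := by
    conv_lhs => rw [← step1]
    rw [mapmap]
    simp only [LinearMap.id_comp]
    rw [hwu]
  have huu : TensorProduct.map (v ∘ₗ v) (v ∘ₗ v) ρ = ρ := by
    rw [← mapmap, hss]
    exact hss
  have step3 : TensorProduct.map LinearMap.id (s.toLinearMap ∘ₗ s.toLinearMap) ρ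
      = TensorProduct.map (v ∘ₗ v) LinearMap.id ρ := by
    conv_lhs => rw [← huu]
    rw [mapmap]
    simp only [LinearMap.id_comp]
    rw [hwu]
  have hX2 : TensorProduct.map t LinearMap.id ρ
      = TensorProduct.map (v ∘ₗ v) LinearMap.id ρ := step2.symm.trans step3
  -- agreement on the generating set
  have hgen : ∀ x ∈ contractSet k A ρ, t x = (v ∘ₗ v) x := by
    rintro x ⟨f, g, rfl⟩
    have e1 : t (contractL k A f ρ) = (v ∘ₗ v) (contractL k A f ρ) := by
      rw [← contractL_map f t ρ, ← contractL_map f (v ∘ₗ v) ρ, hX]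
    have e2 : t (contractR k A g ρ) = (v ∘ₗ v) (contractR k A g ρ) := by
      rw [← contractR_map g t ρ, ← contractR_map g (v ∘ₗ v) ρ, hX2]
    rw [map_add, map_add, e1, e2]
  -- extend to all of A by minimality
  let T : A →ₐ[k] A := AlgHom.ofLinearMap t ht.tu_one ht.tu_mul
  have hU1 : (v ∘ₗ v) (1 : A) = 1 := by
    rw [hv_def]; simp only [LinearMap.comp_apply, LinearEquiv.coe_coe]; rw [hs1, hs1]
  have hUmul : ∀ a b : A, (v ∘ₗ v) (a * b) = (v ∘ₗ v) a * (v ∘ₗ v) b := by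
    intro a b
    simp only [LinearMap.comp_apply, hv_def, LinearEquiv.coe_coe]
    rw [hs_anti, hs_anti]
  let U : A →ₐ[k] A := AlgHom.ofLinearMap (v ∘ₗ v) hU1 hUmul
  have hsub : contractSet k A ρ ⊆ (AlgHom.equalizer T U : Subalgebra k A) := by
    intro x hx
    exact hgen x hx
  have htop : (⊤ : Subalgebra k A) ≤ AlgHom.equalizer T U :=
    hmin ▸ Algebra.adjoin_le hsub
  ext a
  have hTU : T a = U a := htop (Algebra.mem_top)
  exact hTU
end

section
/- Let (A, ρ) be a minimal quasitriangular Hopf algebra with antipode s over a field k, and let t be a Hopf algebra automorphism of A. Then (A, ρ, t) is a balanced oriented quantum algebra if and only if ρ = (t ⊗ t)(ρ) and t² = s⁻². -/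
open TensorProduct

open TensorProduct

noncomputable section

variable (k : Type*) [Field k] (A : Type*) [Ring A] [HopfAlgebra k A]

/-- `(A, ρ)` is a quasitriangular Hopf algebra (with `ρinv` the inverse of `ρ`). -/
structure Quasitriangular (ρ ρinv : A ⊗[k] A) : Prop where
  mul_inv : ρ * ρinv = 1
  inv_mul : ρinv * ρ = 1
  almost_cocomm : ∀ x : A,
    (TensorProduct.comm k A A) (Coalgebra.comul (R := k) x) * ρ =
      ρ * Coalgebra.comul (R := k) x
  hex1 : (TensorProduct.assoc k A A A)
      (TensorProduct.map (Coalgebra.comul (R := k)) LinearMap.id ρ) =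
      rho13 k A ρ * rho23 k A ρ
  hex2 : TensorProduct.map LinearMap.id (Coalgebra.comul (R := k)) ρ =
      rho13 k A ρ * rho12 k A ρ

/-- `t` is a Hopf algebra automorphism of `A`. -/
structure IsHopfAuto (t : A →ₗ[k] A) : Prop where
  bij : Function.Bijective t
  map_one : t 1 = 1
  map_mul : ∀ a b : A, t (a * b) = t a * t b
  comul_comp : ∀ a : A,
    Coalgebra.comul (R := k) (t a) = TensorProduct.map t t (Coalgebra.comul (R := k) a)
  counit_comp : ∀ a : A, Coalgebra.counit (R := k) (t a) = Coalgebra.counit (R := k) a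

end
namespace QTAux

open TensorProduct Coalgebra

variable {k : Type*} [Field k] {A : Type*} [Ring A] [HopfAlgebra k A]

local notation "𝒮" => HopfAlgebra.antipode (R := k) (A := A)
local notation "Δ" => Coalgebra.comul (R := k) (A := A)
local notation "ε" => Coalgebra.counit (R := k) (A := A)

lemma repr_smul_right {x : A} {ι : Type*} (r : Coalgebra.Repr k x ι) :
    ∑ i ∈ r.index, ε (r.left i) • r.right i = x := by
  have h := Coalgebra.sum_counit_tmul_eq (R := k) r
  apply_fun (TensorProduct.lid k A) at h
  rw [map_sum] at h
  simp only [TensorProduct.lid_tmul] at h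
  simpa using h

lemma repr_smul_left {x : A} {ι : Type*} (r : Coalgebra.Repr k x ι) :
    ∑ i ∈ r.index, ε (r.right i) • r.left i = x := by
  have h := Coalgebra.sum_tmul_counit_eq (R := k) r
  apply_fun (TensorProduct.rid k A) at h
  rw [map_sum] at h
  simp only [TensorProduct.rid_tmul] at h
  simpa using h

lemma antipode_one : 𝒮 (1 : A) = 1 := by
  have h := HopfAlgebra.mul_antipode_rTensor_comul_apply (R := k) (A := A) 1
  rw [Bialgebra.comul_one] at h
  simpa [Algebra.TensorProduct.one_def] using h

/-- A representation of `comul (x * y)` from representations of `x` and `y`. -/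
noncomputable def mulRepr {x y : A} {ι κ : Type*} (rx : Coalgebra.Repr k x ι) (ry : Coalgebra.Repr k y κ) :
    Coalgebra.Repr k (x * y) (ι × κ) where
  index := rx.index ×ˢ ry.index
  left p := rx.left p.1 * ry.left p.2
  right p := rx.right p.1 * ry.right p.2
  eq := by
    rw [Finset.sum_product]
    rw [Bialgebra.comul_mul, ← rx.eq, ← ry.eq, Finset.sum_mul_sum]
    simp [Algebra.TensorProduct.tmul_mul_tmul]

@[simp] lemma mulRepr_index {x y : A} {ι κ : Type*} (rx : Coalgebra.Repr k x ι) (ry : Coalgebra.Repr k y κ) :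
    (mulRepr rx ry).index = rx.index ×ˢ ry.index := rfl


@[simp] lemma mulRepr_left {x y : A} {ι κ : Type*} (rx : Coalgebra.Repr k x ι) (ry : Coalgebra.Repr k y κ)
    (p : rx.ι × ry.ι) : (mulRepr rx ry).left p = rx.left p.1 * ry.left p.2 := rfl

@[simp] lemma mulRepr_right {x y : A} {ι κ : Type*} (rx : Coalgebra.Repr k x ι) (ry : Coalgebra.Repr k y κ)
    (p : rx.ι × ry.ι) : (mulRepr rx ry).right p = rx.right p.1 * ry.right p.2 := rfl

/-- The 6-ary multiplication map used in the proof that the antipode is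
anti-multiplicative. -/
noncomputable def psiMap : (A ⊗[k] (A ⊗[k] A)) ⊗[k] (A ⊗[k] (A ⊗[k] A)) →ₗ[k] A :=
  (LinearMap.mul' k A ∘ₗ LinearMap.lTensor A (LinearMap.mul' k A)) ∘ₗ
    TensorProduct.map (𝒮 ∘ₗ LinearMap.mul' k A)
      (TensorProduct.map (LinearMap.mul' k A)
        (LinearMap.mul' k A ∘ₗ TensorProduct.map 𝒮 𝒮 ∘ₗ (TensorProduct.comm k A A).toLinearMap)) ∘ₗ
    (LinearMap.lTensor (A ⊗[k] A) (TensorProduct.tensorTensorTensorComm k A A A A).toLinearMap) ∘ₗ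
    (TensorProduct.tensorTensorTensorComm k A (A ⊗[k] A) A (A ⊗[k] A)).toLinearMap

@[simp] lemma psiMap_tmul (x1 x2 x3 y1 y2 y3 : A) :
    psiMap (k := k) ((x1 ⊗ₜ (x2 ⊗ₜ x3)) ⊗ₜ (y1 ⊗ₜ (y2 ⊗ₜ y3))) =
      𝒮 (x1 * y1) * ((x2 * y2) * (𝒮 y3 * 𝒮 x3)) := by
  simp [psiMap, TensorProduct.tensorTensorTensorComm_tmul]

lemma antipode_mul (a b : A) : 𝒮 (a * b) = 𝒮 b * 𝒮 a := by
  classical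
  have ra := ℛ k a
  have rb := ℛ k b
  have ra1 : ∀ i, Coalgebra.Repr k (ra.left i) (A × A) := fun i => ℛ k (ra.left i)
  have ra2 : ∀ i, Coalgebra.Repr k (ra.right i) (A × A) := fun i => ℛ k (ra.right i)
  have rb1 : ∀ j, Coalgebra.Repr k (rb.left j) (A × A) := fun j => ℛ k (rb.left j)
  have rb2 : ∀ j, Coalgebra.Repr k (rb.right j) (A × A) := fun j => ℛ k (rb.right j)
  have ha := Coalgebra.sum_tmul_tmul_eq (R := k) ra ra1 ra2
  have hb := Coalgebra.sum_tmul_tmul_eq (R := k) rb rb1 rb2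
  have hsa : (∑ i ∈ ra.index, ε (ra.left i) • 𝒮 (ra.right i)) = 𝒮 a := by
    calc (∑ i ∈ ra.index, ε (ra.left i) • 𝒮 (ra.right i))
        = 𝒮 (∑ i ∈ ra.index, ε (ra.left i) • ra.right i) := by simp [map_sum, map_smul]
      _ = 𝒮 a := by rw [repr_smul_right ra]
  have hsb : (∑ j ∈ rb.index, ε (rb.left j) • 𝒮 (rb.right j)) = 𝒮 b := by
    calc (∑ j ∈ rb.index, ε (rb.left j) • 𝒮 (rb.right j))
        = 𝒮 (∑ j ∈ rb.index, ε (rb.left j) • rb.right j) := by simp [map_sum, map_smul]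
      _ = 𝒮 b := by rw [repr_smul_right rb]
  have bridge : psiMap (k := k)
      ((∑ i ∈ ra.index, ∑ m ∈ (ra1 i).index,
          (ra1 i).left m ⊗ₜ[k] ((ra1 i).right m ⊗ₜ[k] ra.right i)) ⊗ₜ[k]
        (∑ j ∈ rb.index, ∑ n ∈ (rb1 j).index,
          (rb1 j).left n ⊗ₜ[k] ((rb1 j).right n ⊗ₜ[k] rb.right j))) =
      psiMap (k := k)
      ((∑ i ∈ ra.index, ∑ m ∈ (ra2 i).index,
          ra.left i ⊗ₜ[k] ((ra2 i).left m ⊗ₜ[k] (ra2 i).right m)) ⊗ₜ[k]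
        (∑ j ∈ rb.index, ∑ n ∈ (rb2 j).index,
          rb.left j ⊗ₜ[k] ((rb2 j).left n ⊗ₜ[k] (rb2 j).right n))) := by
    rw [ha, hb]
  simp only [TensorProduct.sum_tmul, TensorProduct.tmul_sum, map_sum, psiMap_tmul] at bridge
  -- the right-hand side of `bridge` equals `𝒮 (a * b)`
  have hR : (∑ j ∈ rb.index, ∑ n ∈ (rb2 j).index, ∑ i ∈ ra.index, ∑ m ∈ (ra2 i).index,
      𝒮 (ra.left i * rb.left j) *
        ((ra2 i).left m * (rb2 j).left n *
          (𝒮 ((rb2 j).right n) * 𝒮 ((ra2 i).right m)))) = 𝒮 (a * b) := by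
    have reord : ∀ j, (∑ n ∈ (rb2 j).index, ∑ i ∈ ra.index, ∑ m ∈ (ra2 i).index,
        𝒮 (ra.left i * rb.left j) *
          ((ra2 i).left m * (rb2 j).left n *
            (𝒮 ((rb2 j).right n) * 𝒮 ((ra2 i).right m)))) =
        ∑ i ∈ ra.index, (ε (ra.right i) * ε (rb.right j)) • 𝒮 (ra.left i * rb.left j) := by
      intro j
      rw [Finset.sum_comm]
      refine Finset.sum_congr rfl fun i _ => ?_
      rw [Finset.sum_comm]
      have key : ∀ m, (∑ n ∈ (rb2 j).index,
          𝒮 (ra.left i * rb.left j) *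
            ((ra2 i).left m * (rb2 j).left n *
              (𝒮 ((rb2 j).right n) * 𝒮 ((ra2 i).right m)))) =
          ε (rb.right j) • (𝒮 (ra.left i * rb.left j) *
            ((ra2 i).left m * 𝒮 ((ra2 i).right m))) := by
        intro m
        have tm : ∀ n, (ra2 i).left m * (rb2 j).left n *
            (𝒮 ((rb2 j).right n) * 𝒮 ((ra2 i).right m)) =
            (ra2 i).left m * ((rb2 j).left n * 𝒮 ((rb2 j).right n) * 𝒮 ((ra2 i).right m)) := by
          intro n
          rw [mul_assoc ((ra2 i).left m), mul_assoc ((rb2 j).left n)]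
        simp only [tm]
        rw [← Finset.mul_sum, ← Finset.mul_sum, ← Finset.sum_mul,
          HopfAlgebra.sum_mul_antipode_eq_smul (rb2 j),
          smul_mul_assoc, one_mul, mul_smul_comm, mul_smul_comm]
      simp only [key]
      rw [← Finset.smul_sum, ← Finset.mul_sum,
        HopfAlgebra.sum_mul_antipode_eq_smul (ra2 i),
        mul_smul_comm, mul_one, smul_smul, mul_comm (ε (rb.right j))]
    refine Eq.trans (Finset.sum_congr rfl fun j _ => reord j) ?_
    have factor : (∑ j ∈ rb.index, ∑ i ∈ ra.index,
        (ε (ra.right i) * ε (rb.right j)) • (ra.left i * rb.left j)) = a * b := by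
      have inner : ∀ j, (∑ i ∈ ra.index,
          (ε (ra.right i) * ε (rb.right j)) • (ra.left i * rb.left j)) =
          a * (ε (rb.right j) • rb.left j) := by
        intro j
        have tm : ∀ i, (ε (ra.right i) * ε (rb.right j)) • (ra.left i * rb.left j) =
            (ε (ra.right i) • ra.left i) * (ε (rb.right j) • rb.left j) := by
          intro i; rw [smul_mul_assoc, mul_smul_comm, smul_smul]
        simp only [tm]
        rw [← Finset.sum_mul, repr_smul_left ra]
      simp only [inner]
      rw [← Finset.mul_sum, repr_smul_left rb]
    calc (∑ j ∈ rb.index, ∑ i ∈ ra.index,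
        (ε (ra.right i) * ε (rb.right j)) • 𝒮 (ra.left i * rb.left j))
        = 𝒮 (∑ j ∈ rb.index, ∑ i ∈ ra.index,
            (ε (ra.right i) * ε (rb.right j)) • (ra.left i * rb.left j)) := by
          simp [map_sum, map_smul]
      _ = 𝒮 (a * b) := by rw [factor]
  -- the left-hand side of `bridge` equals `𝒮 b * 𝒮 a`
  have hL : (∑ j ∈ rb.index, ∑ n ∈ (rb1 j).index, ∑ i ∈ ra.index, ∑ m ∈ (ra1 i).index,
      𝒮 ((ra1 i).left m * (rb1 j).left n) *
        ((ra1 i).right m * (rb1 j).right n *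
          (𝒮 (rb.right j) * 𝒮 (ra.right i)))) = 𝒮 b * 𝒮 a := by
    have reord : ∀ j, (∑ n ∈ (rb1 j).index, ∑ i ∈ ra.index, ∑ m ∈ (ra1 i).index,
        𝒮 ((ra1 i).left m * (rb1 j).left n) *
          ((ra1 i).right m * (rb1 j).right n *
            (𝒮 (rb.right j) * 𝒮 (ra.right i)))) =
        ∑ i ∈ ra.index, (ε (ra.left i) * ε (rb.left j)) •
          (𝒮 (rb.right j) * 𝒮 (ra.right i)) := by
      intro j
      rw [Finset.sum_comm]
      refine Finset.sum_congr rfl fun i _ => ?_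
      rw [Finset.sum_comm]
      have tm : ∀ m n, 𝒮 ((ra1 i).left m * (rb1 j).left n) *
          ((ra1 i).right m * (rb1 j).right n * (𝒮 (rb.right j) * 𝒮 (ra.right i))) =
          𝒮 ((ra1 i).left m * (rb1 j).left n) *
            ((ra1 i).right m * (rb1 j).right n) * (𝒮 (rb.right j) * 𝒮 (ra.right i)) := by
        intro m n; simp only [mul_assoc]
      simp only [tm]
      simp only [← Finset.sum_mul]
      have hm : (∑ m ∈ (ra1 i).index, ∑ n ∈ (rb1 j).index,
          𝒮 ((ra1 i).left m * (rb1 j).left n) * ((ra1 i).right m * (rb1 j).right n)) =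
          ε (ra.left i * rb.left j) • (1 : A) := by
        rw [← Finset.sum_product']
        exact HopfAlgebra.sum_antipode_mul_eq_smul (R := k) (mulRepr (ra1 i) (rb1 j))
      rw [hm, Bialgebra.counit_mul, smul_mul_assoc, one_mul]
    refine Eq.trans (Finset.sum_congr rfl fun j _ => reord j) ?_
    have fac : ∀ j, (∑ i ∈ ra.index, (ε (ra.left i) * ε (rb.left j)) •
        (𝒮 (rb.right j) * 𝒮 (ra.right i))) =
        (ε (rb.left j) • 𝒮 (rb.right j)) * 𝒮 a := by
      intro j
      have tm : ∀ i, (ε (ra.left i) * ε (rb.left j)) • (𝒮 (rb.right j) * 𝒮 (ra.right i)) =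
          (ε (rb.left j) • 𝒮 (rb.right j)) * (ε (ra.left i) • 𝒮 (ra.right i)) := by
        intro i
        rw [smul_mul_assoc, mul_smul_comm, smul_smul, mul_comm (ε (ra.left i))]
      simp only [tm]
      rw [← Finset.mul_sum, hsa]
    simp only [fac]
    rw [← Finset.sum_mul, hsb]
  rw [← hR, ← bridge]
  exact hL


section HopfAuto

variable {t : A →ₗ[k] A}

/-- The linear equivalence underlying a Hopf-algebra automorphism. -/
noncomputable def tEquiv (ht : IsHopfAuto k A t) : A ≃ₗ[k] A :=
  LinearEquiv.ofBijective t ht.bij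

lemma t_tEquiv_symm (ht : IsHopfAuto k A t) (x : A) : t ((tEquiv ht).symm x) = x :=
  (tEquiv ht).apply_symm_apply x

lemma tEquiv_symm_t (ht : IsHopfAuto k A t) (x : A) : (tEquiv ht).symm (t x) = x :=
  (tEquiv ht).symm_apply_apply x

lemma counit_tEquiv_symm (ht : IsHopfAuto k A t) (x : A) :
    ε ((tEquiv ht).symm x) = ε x := by
  conv_rhs => rw [← t_tEquiv_symm ht x, ht.counit_comp]

lemma t_antipode (ht : IsHopfAuto k A t) (x : A) : t (𝒮 x) = 𝒮 (t x) := by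
  classical
  set s' : A →ₗ[k] A := t ∘ₗ 𝒮 ∘ₗ ((tEquiv ht).symm : A ≃ₗ[k] A).toLinearMap with hs'
  have hs'app : ∀ y : A, s' y = t (𝒮 ((tEquiv ht).symm y)) := fun y => rfl
  have hs't : ∀ y : A, s' (t y) = t (𝒮 y) := by
    intro y; rw [hs'app, tEquiv_symm_t ht]
  -- `s'` is a left convolution-inverse of the identity
  have sum_eq : ∀ (z : A) (r : Coalgebra.Repr k z (A × A)),
      (∑ i ∈ r.index, s' (r.left i) * r.right i) =
      (LinearMap.mul' k A ∘ₗ TensorProduct.map s' LinearMap.id) (Coalgebra.comul (R := k) z) := by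
    intro z r
    rw [← r.eq, map_sum]
    simp
  have leftconv : ∀ (z : A) (r : Coalgebra.Repr k z (A × A)),
      (∑ i ∈ r.index, s' (r.left i) * r.right i) = ε z • 1 := by
    intro z r
    rw [sum_eq z r]
    have hz : Coalgebra.comul (R := k) z =
        TensorProduct.map t t (Coalgebra.comul (R := k) ((tEquiv ht).symm z)) := by
      conv_lhs => rw [← t_tEquiv_symm ht z, ht.comul_comp]
    rw [hz]
    have ry := ℛ k ((tEquiv ht).symm z)
    rw [← ry.eq, map_sum, map_sum]
    simp only [TensorProduct.map_tmul, LinearMap.coe_comp, Function.comp_apply,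
      LinearMap.mul'_apply, LinearMap.id_coe, id_eq]
    have hterm : ∀ i, s' (t (ry.left i)) * t (ry.right i) =
        t (𝒮 (ry.left i) * ry.right i) := by
      intro i; rw [hs't, ht.map_mul]
    simp only [hterm]
    rw [← map_sum, HopfAlgebra.sum_antipode_mul_eq_smul ry, map_smul, ht.map_one,
      counit_tEquiv_symm ht]
  -- uniqueness chain : `s' = 𝒮`
  have main : ∀ y : A, s' y = 𝒮 y := by
    intro y
    have r := ℛ k y
    have r1 : ∀ i, Coalgebra.Repr k (r.left i) (A × A) := fun i => ℛ k (r.left i)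
    have r2 : ∀ i, Coalgebra.Repr k (r.right i) (A × A) := fun i => ℛ k (r.right i)
    set Φ : A ⊗[k] (A ⊗[k] A) →ₗ[k] A :=
      (LinearMap.mul' k A ∘ₗ LinearMap.lTensor A (LinearMap.mul' k A)) ∘ₗ
        TensorProduct.map s' (TensorProduct.map LinearMap.id 𝒮) with hΦ
    have hΦapp : ∀ u v w : A, Φ (u ⊗ₜ (v ⊗ₜ w)) = s' u * (v * 𝒮 w) := by
      intro u v w; simp [hΦ]
    have bridge := congrArg Φ (Coalgebra.sum_tmul_tmul_eq (R := k) r r1 r2)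
    rw [map_sum, map_sum] at bridge
    simp only [map_sum, hΦapp] at bridge
    have hRside : (∑ i ∈ r.index, ∑ m ∈ (r2 i).index,
        s' (r.left i) * ((r2 i).left m * 𝒮 ((r2 i).right m))) = s' y := by
      have inner : ∀ i, (∑ m ∈ (r2 i).index,
          s' (r.left i) * ((r2 i).left m * 𝒮 ((r2 i).right m))) =
          ε (r.right i) • s' (r.left i) := by
        intro i
        rw [← Finset.mul_sum, HopfAlgebra.sum_mul_antipode_eq_smul (r2 i),
          mul_smul_comm, mul_one]
      simp only [inner]
      calc (∑ i ∈ r.index, ε (r.right i) • s' (r.left i))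
          = s' (∑ i ∈ r.index, ε (r.right i) • r.left i) := by simp [map_sum, map_smul]
        _ = s' y := by rw [repr_smul_left r]
    have hLside : (∑ i ∈ r.index, ∑ m ∈ (r1 i).index,
        s' ((r1 i).left m) * ((r1 i).right m * 𝒮 (r.right i))) = 𝒮 y := by
      have inner : ∀ i, (∑ m ∈ (r1 i).index,
          s' ((r1 i).left m) * ((r1 i).right m * 𝒮 (r.right i))) =
          ε (r.left i) • 𝒮 (r.right i) := by
        intro i
        simp only [← mul_assoc]
        rw [← Finset.sum_mul, leftconv (r.left i) (r1 i), smul_mul_assoc, one_mul]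
      simp only [inner]
      calc (∑ i ∈ r.index, ε (r.left i) • 𝒮 (r.right i))
          = 𝒮 (∑ i ∈ r.index, ε (r.left i) • r.right i) := by simp [map_sum, map_smul]
        _ = 𝒮 y := by rw [repr_smul_right r]
    rw [hLside, hRside] at bridge
    exact bridge.symm
  rw [← hs't, main]

end HopfAuto


section Struct

/-- Counit contraction in the first slot, as an algebra map. -/
noncomputable def cLa : A ⊗[k] A →ₐ[k] A :=
  Algebra.TensorProduct.lift ((Algebra.ofId k A).comp (Bialgebra.counitAlgHom k A))
    (AlgHom.id k A) (fun x y => Algebra.commutes _ _)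

/-- Counit contraction in the second slot, as an algebra map. -/
noncomputable def cRa : A ⊗[k] A →ₐ[k] A :=
  Algebra.TensorProduct.lift (AlgHom.id k A)
    ((Algebra.ofId k A).comp (Bialgebra.counitAlgHom k A))
    (fun x y => (Algebra.commutes _ _).symm)

@[simp] lemma cLa_tmul (x y : A) : cLa (k := k) (x ⊗ₜ y) = ε x • y := by
  show (Algebra.ofId k A) (ε x) * y = _
  rw [Algebra.ofId_apply, ← Algebra.smul_def]

@[simp] lemma cRa_tmul (x y : A) : cRa (k := k) (x ⊗ₜ y) = ε y • x := by
  show x * (Algebra.ofId k A) (ε y) = _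
  rw [Algebra.ofId_apply, ← Algebra.commutes, ← Algebra.smul_def]

lemma cLa_comul (x : A) : cLa (k := k) (Coalgebra.comul (R := k) x) = x := by
  have r := ℛ k x
  rw [← r.eq, map_sum]
  simp only [cLa_tmul]
  exact repr_smul_right r

lemma cRa_comul (x : A) : cRa (k := k) (Coalgebra.comul (R := k) x) = x := by
  have r := ℛ k x
  rw [← r.eq, map_sum]
  simp only [cRa_tmul]
  exact repr_smul_left r

lemma counit_expand {x : A} {ι : Type*} (r : Coalgebra.Repr k x ι) :
    ε x = ∑ i ∈ r.index, ε (r.left i) * ε (r.right i) := by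
  conv_lhs => rw [← repr_smul_right r]
  rw [map_sum]
  simp [smul_eq_mul]

variable (P Pinv : A ⊗[k] A)

lemma genF1L (h1 : P * Pinv = 1)
    (hx : (TensorProduct.assoc k A A A)
        (TensorProduct.map (Coalgebra.comul (R := k)) LinearMap.id P) =
      rho13 k A P * rho23 k A P) :
    cLa (k := k) P = 1 := by
  set E1 : A ⊗[k] (A ⊗[k] A) →ₐ[k] A :=
    (cLa (k := k)).comp (Algebra.TensorProduct.map (AlgHom.id k A) (cLa (k := k))) with hE1
  have hE1t : ∀ x y z : A, E1 (x ⊗ₜ (y ⊗ₜ z)) = (ε x * ε y) • z := by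
    intro x y z; simp [hE1, smul_smul, mul_comm]
  have h13 : ∀ z : A ⊗[k] A, E1 (rho13 k A z) = cLa (k := k) z := by
    intro z
    induction z using TensorProduct.induction_on with
    | zero => simp
    | tmul x y => simp [rho13, hE1t]
    | add u v hu hv => rw [map_add, map_add, hu, hv, map_add]
  have h23 : ∀ z : A ⊗[k] A, E1 (rho23 k A z) = cLa (k := k) z := by
    intro z
    induction z using TensorProduct.induction_on with
    | zero => simp
    | tmul x y => simp [rho23, hE1t]
    | add u v hu hv => rw [map_add, map_add, hu, hv, map_add]
  have hassoc : ∀ z : A ⊗[k] A,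
      E1 ((TensorProduct.assoc k A A A)
        (TensorProduct.map (Coalgebra.comul (R := k)) LinearMap.id z)) = cLa (k := k) z := by
    intro z
    induction z using TensorProduct.induction_on with
    | zero => rw [map_zero, LinearEquiv.map_zero, map_zero, map_zero]
    | tmul x y =>
      rw [TensorProduct.map_tmul]
      have r := ℛ k x
      rw [LinearMap.id_coe, id_eq, ← r.eq, TensorProduct.sum_tmul, map_sum, map_sum]
      simp only [TensorProduct.assoc_tmul, hE1t]
      rw [cLa_tmul, counit_expand r, Finset.sum_smul]
    | add u v hu hv => rw [map_add, map_add, map_add, hu, hv, map_add]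
  have hsq : cLa (k := k) P = cLa (k := k) P * cLa (k := k) P := by
    have h := congrArg E1 hx
    rwa [hassoc, map_mul, h13, h23] at h
  have hinv1 : cLa (k := k) P * cLa (k := k) Pinv = 1 := by
    rw [← map_mul, h1, map_one]
  calc cLa (k := k) P = cLa (k := k) P * 1 := (mul_one _).symm
    _ = cLa (k := k) P * (cLa (k := k) P * cLa (k := k) Pinv) := by rw [hinv1]
    _ = (cLa (k := k) P * cLa (k := k) P) * cLa (k := k) Pinv := by rw [mul_assoc]
    _ = cLa (k := k) P * cLa (k := k) Pinv := by rw [← hsq]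
    _ = 1 := hinv1

lemma genF1R (h1 : P * Pinv = 1)
    (hx : TensorProduct.map LinearMap.id (Coalgebra.comul (R := k)) P =
      rho13 k A P * rho12 k A P) :
    cRa (k := k) P = 1 := by
  set E2 : A ⊗[k] (A ⊗[k] A) →ₐ[k] A :=
    (cRa (k := k)).comp (Algebra.TensorProduct.map (AlgHom.id k A) (cRa (k := k))) with hE2
  have hE2t : ∀ x y z : A, E2 (x ⊗ₜ (y ⊗ₜ z)) = (ε y * ε z) • x := by
    intro x y z; simp [hE2, smul_smul, mul_comm]
  have h13 : ∀ z : A ⊗[k] A, E2 (rho13 k A z) = cRa (k := k) z := by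
    intro z
    induction z using TensorProduct.induction_on with
    | zero => simp
    | tmul x y => simp [rho13, hE2t]
    | add u v hu hv => rw [map_add, map_add, hu, hv, map_add]
  have h12 : ∀ z : A ⊗[k] A, E2 (rho12 k A z) = cRa (k := k) z := by
    intro z
    induction z using TensorProduct.induction_on with
    | zero => simp
    | tmul x y => simp [rho12, hE2t]
    | add u v hu hv => rw [map_add, map_add, hu, hv, map_add]
  have hmapd : ∀ z : A ⊗[k] A,
      E2 (TensorProduct.map LinearMap.id (Coalgebra.comul (R := k)) z) = cRa (k := k) z := by
    intro z
    induction z using TensorProduct.induction_on with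
    | zero => simp
    | tmul x y =>
      rw [TensorProduct.map_tmul]
      have r := ℛ k y
      rw [LinearMap.id_coe, id_eq, ← r.eq, TensorProduct.tmul_sum, map_sum]
      simp only [hE2t]
      rw [cRa_tmul, counit_expand r, Finset.sum_smul]
    | add u v hu hv => rw [map_add, map_add, hu, hv, map_add]
  have hsq : cRa (k := k) P = cRa (k := k) P * cRa (k := k) P := by
    have h := congrArg E2 hx
    rwa [hmapd, map_mul, h13, h12] at h
  have hinv1 : cRa (k := k) P * cRa (k := k) Pinv = 1 := by
    rw [← map_mul, h1, map_one]
  calc cRa (k := k) P = cRa (k := k) P * 1 := (mul_one _).symm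
    _ = cRa (k := k) P * (cRa (k := k) P * cRa (k := k) Pinv) := by rw [hinv1]
    _ = (cRa (k := k) P * cRa (k := k) P) * cRa (k := k) Pinv := by rw [mul_assoc]
    _ = cRa (k := k) P * cRa (k := k) Pinv := by rw [← hsq]
    _ = 1 := hinv1

lemma genAnti (h1 : P * Pinv = 1)
    (hx : (TensorProduct.assoc k A A A)
        (TensorProduct.map (Coalgebra.comul (R := k)) LinearMap.id P) =
      rho13 k A P * rho23 k A P) :
    TensorProduct.map 𝒮 LinearMap.id P = Pinv := by
  set K : A ⊗[k] (A ⊗[k] A) →ₗ[k] A ⊗[k] A :=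
    (TensorProduct.map (LinearMap.mul' k A) LinearMap.id) ∘ₗ
      (TensorProduct.assoc k A A A).symm.toLinearMap ∘ₗ
      (TensorProduct.map 𝒮 (LinearMap.id : A ⊗[k] A →ₗ[k] A ⊗[k] A)) with hK
  have hKt : ∀ x y z : A, K (x ⊗ₜ (y ⊗ₜ z)) = (𝒮 x * y) ⊗ₜ z := by
    intro x y z; simp [hK]
  have hKL : ∀ z : A ⊗[k] A,
      K ((TensorProduct.assoc k A A A)
        (TensorProduct.map (Coalgebra.comul (R := k)) LinearMap.id z)) =
      (1 : A) ⊗ₜ[k] cLa (k := k) z := by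
    intro z
    induction z using TensorProduct.induction_on with
    | zero => rw [map_zero, LinearEquiv.map_zero, map_zero, map_zero, TensorProduct.tmul_zero]
    | tmul x y =>
      rw [TensorProduct.map_tmul]
      have r := ℛ k x
      rw [LinearMap.id_coe, id_eq, ← r.eq, TensorProduct.sum_tmul, map_sum, map_sum]
      simp only [TensorProduct.assoc_tmul, hKt]
      rw [← TensorProduct.sum_tmul, HopfAlgebra.sum_antipode_mul_eq_smul r, cLa_tmul]
      rw [TensorProduct.smul_tmul]
    | add u v hu hv =>
      rw [map_add, map_add, map_add, hu, hv, map_add, TensorProduct.tmul_add]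
  have hKR : ∀ z1 z2 : A ⊗[k] A, K (rho13 k A z1 * rho23 k A z2) =
      (TensorProduct.map 𝒮 LinearMap.id z1) * z2 := by
    intro z1 z2
    induction z1 using TensorProduct.induction_on with
    | zero => simp
    | tmul a b =>
      induction z2 using TensorProduct.induction_on with
      | zero => simp
      | tmul c d =>
        simp [rho13, rho23, Algebra.TensorProduct.tmul_mul_tmul, hKt]
      | add u v hu hv =>
        rw [map_add, mul_add, map_add, hu, hv, mul_add]
    | add u v hu hv =>
      rw [map_add, add_mul, map_add, hu, hv, map_add, add_mul]
  have hmul : (TensorProduct.map 𝒮 LinearMap.id P) * P = 1 := by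
    have h := congrArg K hx
    rw [hKL, hKR, genF1L P Pinv h1 hx] at h
    rw [← h, Algebra.TensorProduct.one_def]
  calc TensorProduct.map 𝒮 LinearMap.id P
      = TensorProduct.map 𝒮 LinearMap.id P * (P * Pinv) := by rw [h1, mul_one]
    _ = (TensorProduct.map 𝒮 LinearMap.id P * P) * Pinv := by rw [mul_assoc]
    _ = Pinv := by rw [hmul, one_mul]

end Struct


section Rho

/-- The cyclic permutation `x ⊗ y ⊗ z ↦ y ⊗ z ⊗ x` as an algebra isomorphism. -/
noncomputable def sigmaCyc : A ⊗[k] (A ⊗[k] A) ≃ₐ[k] A ⊗[k] (A ⊗[k] A) :=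
  (Algebra.TensorProduct.comm k A (A ⊗[k] A)).trans (Algebra.TensorProduct.assoc k k k A A A)

@[simp] lemma sigmaCyc_tmul (x y z : A) :
    sigmaCyc (k := k) (x ⊗ₜ (y ⊗ₜ z)) = y ⊗ₜ (z ⊗ₜ x) := by
  simp [sigmaCyc]

lemma comm_alg_eq (w : A ⊗[k] A) :
    (TensorProduct.comm k A A) w = Algebra.TensorProduct.comm k A A w := rfl

lemma comm_mul (u v : A ⊗[k] A) :
    (TensorProduct.comm k A A) (u * v) =
    (TensorProduct.comm k A A) u * (TensorProduct.comm k A A) v := by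
  rw [comm_alg_eq, comm_alg_eq, comm_alg_eq, map_mul]

lemma comm_one : (TensorProduct.comm k A A) (1 : A ⊗[k] A) = 1 := by
  rw [comm_alg_eq, map_one]

lemma comm_comm (z : A ⊗[k] A) :
    (TensorProduct.comm k A A) ((TensorProduct.comm k A A) z) = z := by
  induction z using TensorProduct.induction_on with
  | zero => simp
  | tmul x y => simp
  | add u v hu hv => rw [map_add, map_add, hu, hv]

lemma comm_map_comm (f g : A →ₗ[k] A) (z : A ⊗[k] A) :
    (TensorProduct.comm k A A) (TensorProduct.map f g ((TensorProduct.comm k A A) z)) =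
    TensorProduct.map g f z := by
  induction z using TensorProduct.induction_on with
  | zero => simp
  | tmul x y => simp
  | add u v hu hv => rw [map_add, map_add, map_add, hu, hv, map_add]

lemma sigmaCyc_mapIdComul (z : A ⊗[k] A) :
    sigmaCyc (k := k) (TensorProduct.map LinearMap.id (Coalgebra.comul (R := k)) z) =
    (TensorProduct.assoc k A A A)
      (TensorProduct.map (Coalgebra.comul (R := k)) LinearMap.id
        ((TensorProduct.comm k A A) z)) := by
  induction z using TensorProduct.induction_on with
  | zero => rw [map_zero, map_zero, map_zero, map_zero, LinearEquiv.map_zero]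
  | tmul x y =>
    rw [TensorProduct.map_tmul, TensorProduct.comm_tmul, TensorProduct.map_tmul]
    simp only [LinearMap.id_coe, id_eq]
    generalize Coalgebra.comul (R := k) y = c
    induction c using TensorProduct.induction_on with
    | zero => rw [TensorProduct.tmul_zero, map_zero, TensorProduct.zero_tmul,
        LinearEquiv.map_zero]
    | tmul u v => rw [sigmaCyc_tmul, TensorProduct.assoc_tmul]
    | add u v hu hv => rw [TensorProduct.tmul_add, map_add, hu, hv,
        TensorProduct.add_tmul, LinearEquiv.map_add]
  | add u v hu hv => rw [map_add, map_add, map_add, map_add, hu, hv, LinearEquiv.map_add]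

lemma sigmaCyc_rho12 (z : A ⊗[k] A) :
    sigmaCyc (k := k) (rho12 k A z) = rho13 k A ((TensorProduct.comm k A A) z) := by
  induction z using TensorProduct.induction_on with
  | zero => rw [map_zero, map_zero, map_zero, map_zero]
  | tmul x y => simp [rho12, rho13]
  | add u v hu hv => rw [map_add, map_add, hu, hv, map_add, map_add]

lemma sigmaCyc_rho13 (z : A ⊗[k] A) :
    sigmaCyc (k := k) (rho13 k A z) = rho23 k A ((TensorProduct.comm k A A) z) := by
  induction z using TensorProduct.induction_on with
  | zero => rw [map_zero, map_zero, map_zero, map_zero]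
  | tmul x y => simp [rho13, rho23]
  | add u v hu hv => rw [map_add, map_add, hu, hv, map_add, map_add]

variable {ρ ρinv : A ⊗[k] A}

lemma rho_inv_eq (hQT : Quasitriangular k A ρ ρinv) :
    TensorProduct.map 𝒮 LinearMap.id ρ = ρinv :=
  genAnti ρ ρinv hQT.mul_inv hQT.hex1

lemma mapIdComul_inv (hQT : Quasitriangular k A ρ ρinv) :
    TensorProduct.map LinearMap.id (Coalgebra.comul (R := k)) ρinv =
    rho12 k A ρinv * rho13 k A ρinv := by
  set D : A ⊗[k] A →ₐ[k] A ⊗[k] (A ⊗[k] A) :=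
    Algebra.TensorProduct.map (AlgHom.id k A) (Bialgebra.comulAlgHom k A) with hD
  have hDlin : ∀ z : A ⊗[k] A,
      D z = TensorProduct.map LinearMap.id (Coalgebra.comul (R := k)) z := by
    intro z
    induction z using TensorProduct.induction_on with
    | zero => rw [map_zero, map_zero]
    | tmul x y => simp [hD]
    | add u v hu hv => rw [map_add, map_add, hu, hv]
  have h2 : D ρinv * D ρ = 1 := by rw [← map_mul, hQT.inv_mul, map_one]
  have hu : D ρ = rho13 k A ρ * rho12 k A ρ := by rw [hDlin]; exact hQT.hex2
  have hv1 : (rho13 k A ρ * rho12 k A ρ) * (rho12 k A ρinv * rho13 k A ρinv) = 1 := by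
    rw [mul_assoc, ← mul_assoc (rho12 k A ρ), ← map_mul, hQT.mul_inv, map_one, one_mul,
      ← map_mul, hQT.mul_inv, map_one]
  have goal' : D ρinv = rho12 k A ρinv * rho13 k A ρinv := by
    calc D ρinv
        = D ρinv * ((rho13 k A ρ * rho12 k A ρ) * (rho12 k A ρinv * rho13 k A ρinv)) := by
          rw [hv1, mul_one]
      _ = (D ρinv * D ρ) * (rho12 k A ρinv * rho13 k A ρinv) := by rw [← hu, ← mul_assoc]
      _ = rho12 k A ρinv * rho13 k A ρinv := by rw [h2, one_mul]
  rw [← hDlin]; exact goal'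

lemma hexbar (hQT : Quasitriangular k A ρ ρinv) :
    (TensorProduct.assoc k A A A)
      (TensorProduct.map (Coalgebra.comul (R := k)) LinearMap.id
        ((TensorProduct.comm k A A) ρinv)) =
    rho13 k A ((TensorProduct.comm k A A) ρinv) *
      rho23 k A ((TensorProduct.comm k A A) ρinv) := by
  rw [← sigmaCyc_mapIdComul, mapIdComul_inv hQT, map_mul, sigmaCyc_rho12, sigmaCyc_rho13]

lemma antipode_sq_rho (hQT : Quasitriangular k A ρ ρinv) :
    TensorProduct.map 𝒮 𝒮 ρ = ρ := by
  have hb1 : (TensorProduct.comm k A A) ρinv * (TensorProduct.comm k A A) ρ = 1 := by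
    rw [← comm_mul, hQT.inv_mul, comm_one]
  have hbar := genAnti ((TensorProduct.comm k A A) ρinv) ((TensorProduct.comm k A A) ρ)
    hb1 (hexbar hQT)
  have h2 : TensorProduct.map LinearMap.id 𝒮 ρinv = ρ := by
    have h := congrArg (TensorProduct.comm k A A) hbar
    rwa [comm_map_comm, comm_comm] at h
  have h3 : TensorProduct.map 𝒮 𝒮 ρ =
      TensorProduct.map LinearMap.id 𝒮 (TensorProduct.map 𝒮 LinearMap.id ρ) := by
    rw [← LinearMap.comp_apply, ← TensorProduct.map_comp, LinearMap.id_comp,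
      LinearMap.comp_id]
  rw [h3, rho_inv_eq hQT, h2]

@[simp] lemma toOpTensor_tmul (x y : A) :
    toOpTensor k A (x ⊗ₜ y) = x ⊗ₜ MulOpposite.op y := by
  simp [toOpTensor]

lemma opN1 (hQT : Quasitriangular k A ρ ρinv) :
    toOpTensor k A (TensorProduct.map LinearMap.id 𝒮 ρ) * toOpTensor k A ρ = 1 := by
  set N1 : A ⊗[k] (A ⊗[k] A) →ₗ[k] A ⊗[k] A :=
    TensorProduct.map LinearMap.id (LinearMap.mul' k A ∘ₗ LinearMap.lTensor A 𝒮) with hN1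
  have hN1t : ∀ x y z : A, N1 (x ⊗ₜ (y ⊗ₜ z)) = x ⊗ₜ (y * 𝒮 z) := by
    intro x y z; simp [hN1]
  have hL : ∀ z : A ⊗[k] A,
      N1 (TensorProduct.map LinearMap.id (Coalgebra.comul (R := k)) z) =
      cRa (k := k) z ⊗ₜ[k] 1 := by
    intro z
    induction z using TensorProduct.induction_on with
    | zero => rw [map_zero, map_zero, map_zero, TensorProduct.zero_tmul]
    | tmul x y =>
      rw [TensorProduct.map_tmul, LinearMap.id_coe, id_eq]
      have r := ℛ k y
      rw [← r.eq, TensorProduct.tmul_sum, map_sum]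
      simp only [hN1t]
      rw [← TensorProduct.tmul_sum, HopfAlgebra.sum_mul_antipode_eq_smul r, cRa_tmul,
        TensorProduct.tmul_smul]
      exact (TensorProduct.smul_tmul' _ _ _).symm
    | add u v hu hv => rw [map_add, map_add, hu, hv, map_add, TensorProduct.add_tmul]
  have hR : ∀ z1 z2 : A ⊗[k] A,
      toOpTensor k A (N1 (rho13 k A z1 * rho12 k A z2)) =
      toOpTensor k A (TensorProduct.map LinearMap.id 𝒮 z1) * toOpTensor k A z2 := by
    intro z1 z2
    induction z1 using TensorProduct.induction_on with
    | zero => simp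
    | tmul a b =>
      induction z2 using TensorProduct.induction_on with
      | zero => simp
      | tmul c d =>
        rw [rho13, rho12]
        simp only [Algebra.TensorProduct.map_tmul, AlgHom.coe_id, id_eq,
          Algebra.TensorProduct.includeRight_apply, Algebra.TensorProduct.includeLeft_apply,
          Algebra.TensorProduct.tmul_mul_tmul, one_mul, mul_one]
        rw [hN1t, TensorProduct.map_tmul, LinearMap.id_coe, id_eq]
        rw [toOpTensor_tmul, toOpTensor_tmul, toOpTensor_tmul,
          Algebra.TensorProduct.tmul_mul_tmul]
        rw [← MulOpposite.op_mul]
      | add u v hu hv => simp [map_add, mul_add, add_mul, hu, hv]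
    | add u v hu hv => simp [map_add, mul_add, add_mul, hu, hv]
  have h := congrArg (fun w => toOpTensor k A (N1 w)) hQT.hex2
  rw [hL, hR, genF1R ρ ρinv hQT.mul_inv hQT.hex2] at h
  rw [← h, toOpTensor_tmul, MulOpposite.op_one]
  exact (Algebra.TensorProduct.one_def).symm

lemma opN2 (hQT : Quasitriangular k A ρ ρinv) :
    toOpTensor k A ρ * toOpTensor k A (TensorProduct.map LinearMap.id 𝒮 ρ) = 1 := by
  set N2 : A ⊗[k] (A ⊗[k] A) →ₗ[k] A ⊗[k] A :=
    TensorProduct.map LinearMap.id (LinearMap.mul' k A ∘ₗ LinearMap.rTensor A 𝒮) with hN2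
  have hN2t : ∀ x y z : A, N2 (x ⊗ₜ (y ⊗ₜ z)) = x ⊗ₜ (𝒮 y * z) := by
    intro x y z; simp [hN2]
  have hL : ∀ z : A ⊗[k] A,
      N2 (TensorProduct.map LinearMap.id (Coalgebra.comul (R := k)) z) =
      cRa (k := k) z ⊗ₜ[k] 1 := by
    intro z
    induction z using TensorProduct.induction_on with
    | zero => rw [map_zero, map_zero, map_zero, TensorProduct.zero_tmul]
    | tmul x y =>
      rw [TensorProduct.map_tmul, LinearMap.id_coe, id_eq]
      have r := ℛ k y
      rw [← r.eq, TensorProduct.tmul_sum, map_sum]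
      simp only [hN2t]
      rw [← TensorProduct.tmul_sum, HopfAlgebra.sum_antipode_mul_eq_smul r, cRa_tmul,
        TensorProduct.tmul_smul]
      exact (TensorProduct.smul_tmul' _ _ _).symm
    | add u v hu hv => rw [map_add, map_add, hu, hv, map_add, TensorProduct.add_tmul]
  have hR : ∀ z1 z2 : A ⊗[k] A,
      toOpTensor k A (N2 (rho13 k A z1 * rho12 k A z2)) =
      toOpTensor k A z1 * toOpTensor k A (TensorProduct.map LinearMap.id 𝒮 z2) := by
    intro z1 z2
    induction z1 using TensorProduct.induction_on with
    | zero => simp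
    | tmul a b =>
      induction z2 using TensorProduct.induction_on with
      | zero => simp
      | tmul c d =>
        rw [rho13, rho12]
        simp only [Algebra.TensorProduct.map_tmul, AlgHom.coe_id, id_eq,
          Algebra.TensorProduct.includeRight_apply, Algebra.TensorProduct.includeLeft_apply,
          Algebra.TensorProduct.tmul_mul_tmul, one_mul, mul_one]
        rw [hN2t, TensorProduct.map_tmul, LinearMap.id_coe, id_eq]
        rw [toOpTensor_tmul, toOpTensor_tmul, toOpTensor_tmul,
          Algebra.TensorProduct.tmul_mul_tmul]
        rw [← MulOpposite.op_mul]
      | add u v hu hv => simp [map_add, mul_add, add_mul, hu, hv]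
    | add u v hu hv => simp [map_add, mul_add, add_mul, hu, hv]
  have h := congrArg (fun w => toOpTensor k A (N2 w)) hQT.hex2
  rw [hL, hR, genF1R ρ ρinv hQT.mul_inv hQT.hex2] at h
  rw [← h, toOpTensor_tmul, MulOpposite.op_one]
  exact (Algebra.TensorProduct.one_def).symm

end Rho


section YBE

/-- Swapping the first two tensor factors, as an algebra isomorphism. -/
noncomputable def sigma12 : A ⊗[k] (A ⊗[k] A) ≃ₐ[k] A ⊗[k] (A ⊗[k] A) :=
  (Algebra.TensorProduct.assoc k k k A A A).symm.trans
    ((Algebra.TensorProduct.congr (Algebra.TensorProduct.comm k A A) AlgEquiv.refl).trans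
      (Algebra.TensorProduct.assoc k k k A A A))

@[simp] lemma sigma12_tmul (x y z : A) :
    sigma12 (k := k) (x ⊗ₜ (y ⊗ₜ z)) = y ⊗ₜ (x ⊗ₜ z) := by
  simp [sigma12]

lemma assoc_tmul_eq (c : A ⊗[k] A) (a : A) :
    (TensorProduct.assoc k A A A) (c ⊗ₜ a) =
    rho12 k A c * ((1 : A) ⊗ₜ[k] ((1 : A) ⊗ₜ[k] a)) := by
  induction c using TensorProduct.induction_on with
  | zero => rw [TensorProduct.zero_tmul, LinearEquiv.map_zero, map_zero, zero_mul]
  | tmul x y =>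
    rw [TensorProduct.assoc_tmul, rho12]
    simp [Algebra.TensorProduct.tmul_mul_tmul]
  | add u v hu hv =>
    rw [TensorProduct.add_tmul, LinearEquiv.map_add, hu, hv, map_add, add_mul]

lemma beta_comm (c : A ⊗[k] A) (a : A) :
    ((1 : A) ⊗ₜ[k] ((1 : A) ⊗ₜ[k] a)) * rho12 k A c =
    rho12 k A c * ((1 : A) ⊗ₜ[k] ((1 : A) ⊗ₜ[k] a)) := by
  induction c using TensorProduct.induction_on with
  | zero => rw [map_zero, zero_mul, mul_zero]
  | tmul x y =>
    rw [rho12]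
    simp [Algebra.TensorProduct.tmul_mul_tmul]
  | add u v hu hv => rw [map_add, add_mul, mul_add, hu, hv]

lemma sigma12_assoc_tmul (c : A ⊗[k] A) (a : A) :
    sigma12 (k := k) ((TensorProduct.assoc k A A A) (c ⊗ₜ a)) =
    rho12 k A ((TensorProduct.comm k A A) c) * ((1 : A) ⊗ₜ[k] ((1 : A) ⊗ₜ[k] a)) := by
  induction c using TensorProduct.induction_on with
  | zero => rw [TensorProduct.zero_tmul, LinearEquiv.map_zero, map_zero, map_zero,
      map_zero, zero_mul]
  | tmul x y =>
    rw [TensorProduct.assoc_tmul, sigma12_tmul, TensorProduct.comm_tmul, rho12]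
    simp [Algebra.TensorProduct.tmul_mul_tmul]
  | add u v hu hv =>
    rw [TensorProduct.add_tmul, LinearEquiv.map_add, map_add, hu, hv, map_add,
      map_add, add_mul]

lemma sigma12_rho13 (z : A ⊗[k] A) :
    sigma12 (k := k) (rho13 k A z) = rho23 k A z := by
  induction z using TensorProduct.induction_on with
  | zero => rw [map_zero, map_zero, map_zero]
  | tmul x y => simp [rho13, rho23]
  | add u v hu hv => rw [map_add, map_add, hu, hv, map_add]

lemma sigma12_rho23 (z : A ⊗[k] A) :
    sigma12 (k := k) (rho23 k A z) = rho13 k A z := by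
  induction z using TensorProduct.induction_on with
  | zero => rw [map_zero, map_zero, map_zero]
  | tmul x y => simp [rho13, rho23]
  | add u v hu hv => rw [map_add, map_add, hu, hv, map_add]

variable {ρ ρinv : A ⊗[k] A}

lemma yangBaxter (hQT : Quasitriangular k A ρ ρinv) : YangBaxter k A ρ := by
  classical
  obtain ⟨S, hS⟩ := TensorProduct.exists_finset (R := k) ρ
  unfold YangBaxter
  rw [mul_assoc, ← hQT.hex1]
  have key : rho12 k A ρ * ((TensorProduct.assoc k A A A)
      (TensorProduct.map (Coalgebra.comul (R := k)) LinearMap.id ρ)) =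
      (sigma12 (k := k) ((TensorProduct.assoc k A A A)
        (TensorProduct.map (Coalgebra.comul (R := k)) LinearMap.id ρ))) * rho12 k A ρ := by
    have expand : (TensorProduct.assoc k A A A)
        (TensorProduct.map (Coalgebra.comul (R := k)) LinearMap.id ρ) =
        ∑ p ∈ S, (TensorProduct.assoc k A A A)
          ((Coalgebra.comul (R := k) p.1) ⊗ₜ[k] p.2) := by
      conv_lhs => rw [hS]
      rw [map_sum, map_sum]
      refine Finset.sum_congr rfl fun p _ => ?_
      rw [TensorProduct.map_tmul, LinearMap.id_coe, id_eq]
    rw [expand, Finset.mul_sum, map_sum, Finset.sum_mul]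
    refine Finset.sum_congr rfl fun p _ => ?_
    conv_lhs => rw [assoc_tmul_eq]
    rw [← mul_assoc, ← map_mul, ← hQT.almost_cocomm, map_mul, mul_assoc, ← beta_comm,
      ← mul_assoc, sigma12_assoc_tmul]
  rw [key, hQT.hex1, map_mul, sigma12_rho13, sigma12_rho23, mul_assoc]

end YBE


section Main

lemma map_map (f g f2 g2 : A →ₗ[k] A) (z : A ⊗[k] A) :
    TensorProduct.map f g (TensorProduct.map f2 g2 z) =
    TensorProduct.map (f ∘ₗ f2) (g ∘ₗ g2) z := by
  rw [← LinearMap.comp_apply, ← TensorProduct.map_comp]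

lemma toOpTensor_injective : Function.Injective (toOpTensor k A) := by
  have h : toOpTensor k A = (TensorProduct.congr (LinearEquiv.refl k A)
      (MulOpposite.opLinearEquiv k (M := A))).toLinearMap := by
    apply TensorProduct.ext'
    intro x y
    simp [toOpTensor]
  rw [h]
  exact (TensorProduct.congr (LinearEquiv.refl k A) (MulOpposite.opLinearEquiv k (M := A))).injective

/-- The antipode squared, as an algebra map. -/
noncomputable def sSqAlg : A →ₐ[k] A where
  toFun := fun x => 𝒮 (𝒮 x)
  map_one' := by show 𝒮 (𝒮 (1 : A)) = 1; rw [antipode_one, antipode_one]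
  map_mul' := fun a b => by
    show 𝒮 (𝒮 (a * b)) = 𝒮 (𝒮 a) * 𝒮 (𝒮 b)
    rw [antipode_mul, antipode_mul]
  map_zero' := by show 𝒮 (𝒮 (0 : A)) = 0; simp
  map_add' := fun a b => by show 𝒮 (𝒮 (a + b)) = 𝒮 (𝒮 a) + 𝒮 (𝒮 b); simp
  commutes' := fun r => by
    show 𝒮 (𝒮 (algebraMap k A r)) = algebraMap k A r
    rw [Algebra.algebraMap_eq_smul_one, map_smul, map_smul, antipode_one, antipode_one]

variable {t : A →ₗ[k] A}

/-- A Hopf automorphism as an algebra map. -/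
noncomputable def tAlg (ht : IsHopfAuto k A t) : A →ₐ[k] A where
  toFun := t
  map_one' := ht.map_one
  map_mul' := ht.map_mul
  map_zero' := map_zero t
  map_add' := map_add t
  commutes' := fun r => by
    show t (algebraMap k A r) = algebraMap k A r
    rw [Algebra.algebraMap_eq_smul_one, map_smul, ht.map_one]

/-- The inverse of a Hopf automorphism as an algebra map. -/
noncomputable def tInvAlg (ht : IsHopfAuto k A t) : A →ₐ[k] A where
  toFun := (tEquiv ht).symm
  map_one' := by
    show (tEquiv ht).symm 1 = 1
    apply ht.bij.injective
    rw [t_tEquiv_symm ht, ht.map_one]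
  map_mul' := fun a b => by
    show (tEquiv ht).symm (a * b) =
      (tEquiv ht).symm a * (tEquiv ht).symm b
    apply ht.bij.injective
    rw [t_tEquiv_symm ht, ht.map_mul, t_tEquiv_symm ht, t_tEquiv_symm ht]
  map_zero' := map_zero _
  map_add' := fun a b => map_add _ _ _
  commutes' := fun r => by
    show (tEquiv ht).symm (algebraMap k A r) = algebraMap k A r
    apply ht.bij.injective
    rw [t_tEquiv_symm ht, Algebra.algebraMap_eq_smul_one, map_smul, ht.map_one]

lemma toOp_algMap (F : A →ₐ[k] A) (z : A ⊗[k] A) :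
    Algebra.TensorProduct.map F (AlgHom.id k Aᵐᵒᵖ) (toOpTensor k A z) =
    toOpTensor k A (TensorProduct.map F.toLinearMap LinearMap.id z) := by
  induction z using TensorProduct.induction_on with
  | zero => simp
  | tmul x y => simp
  | add u v hu hv => rw [map_add, map_add, hu, hv, map_add, map_add]

variable {ρ ρinv : A ⊗[k] A}

lemma tinv_t_id (ht : IsHopfAuto k A t) :
    (((tEquiv ht).symm : A ≃ₗ[k] A) : A →ₗ[k] A) ∘ₗ t = LinearMap.id :=
  LinearMap.ext fun x => tEquiv_symm_t ht x

lemma map_id_t_eq (ht : IsHopfAuto k A t) (hT : TensorProduct.map t t ρ = ρ) :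
    TensorProduct.map LinearMap.id t ρ =
    TensorProduct.map (((tEquiv ht).symm : A ≃ₗ[k] A) : A →ₗ[k] A) LinearMap.id ρ := by
  conv_rhs => rw [← hT]
  rw [map_map, tinv_t_id ht, LinearMap.id_comp]

lemma map_tinv_s_eq (ht : IsHopfAuto k A t) (hT : TensorProduct.map t t ρ = ρ) :
    TensorProduct.map (((tEquiv ht).symm : A ≃ₗ[k] A) : A →ₗ[k] A) 𝒮 ρ =
    TensorProduct.map LinearMap.id (𝒮 ∘ₗ t) ρ := by
  conv_lhs => rw [← hT]
  rw [map_map, tinv_t_id ht]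

/-- Equivalence of the oriented-quantum-algebra axiom (1) with the exchange identity. -/
lemma qa1_iff (hQT : Quasitriangular k A ρ ρinv) (ht : IsHopfAuto k A t)
    (hT : TensorProduct.map t t ρ = ρ) :
    (toOpTensor k A (TensorProduct.map LinearMap.id t ρ) *
        toOpTensor k A (TensorProduct.map t LinearMap.id ρinv) = 1 ∧
      toOpTensor k A (TensorProduct.map t LinearMap.id ρinv) *
        toOpTensor k A (TensorProduct.map LinearMap.id t ρ) = 1) ↔
    TensorProduct.map (t ∘ₗ 𝒮) LinearMap.id ρ =
      TensorProduct.map LinearMap.id (𝒮 ∘ₗ t) ρ := by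
  set tinv : A →ₗ[k] A := (((tEquiv ht).symm : A ≃ₗ[k] A) : A →ₗ[k] A) with htinv
  set X := toOpTensor k A (TensorProduct.map LinearMap.id t ρ) with hX
  set Y := toOpTensor k A (TensorProduct.map t LinearMap.id ρinv) with hY
  set Z := toOpTensor k A (TensorProduct.map tinv 𝒮 ρ) with hZ
  have hGZ : ∀ z : A ⊗[k] A,
      Algebra.TensorProduct.map (tInvAlg ht) (AlgHom.id k Aᵐᵒᵖ) (toOpTensor k A z) =
      toOpTensor k A (TensorProduct.map tinv LinearMap.id z) := by
    intro z
    rw [toOp_algMap]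
    rfl
  have hZX : Z * X = 1 := by
    have h := congrArg (Algebra.TensorProduct.map (tInvAlg ht) (AlgHom.id k Aᵐᵒᵖ)) (opN1 hQT)
    rw [map_mul, map_one, hGZ, hGZ, map_map, LinearMap.comp_id] at h
    rw [hX, map_id_t_eq ht hT, hZ]
    exact h
  have hXZ : X * Z = 1 := by
    have h := congrArg (Algebra.TensorProduct.map (tInvAlg ht) (AlgHom.id k Aᵐᵒᵖ)) (opN2 hQT)
    rw [map_mul, map_one, hGZ, hGZ, map_map, LinearMap.comp_id] at h
    rw [hX, map_id_t_eq ht hT, hZ]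
    exact h
  have hYrw : Y = toOpTensor k A (TensorProduct.map (t ∘ₗ 𝒮) LinearMap.id ρ) := by
    rw [hY, ← rho_inv_eq hQT, map_map, LinearMap.id_comp]
  have hZrw : Z = toOpTensor k A (TensorProduct.map LinearMap.id (𝒮 ∘ₗ t) ρ) := by
    rw [hZ, map_tinv_s_eq ht hT]
  constructor
  · rintro ⟨h1, h2⟩
    apply toOpTensor_injective
    rw [← hYrw, ← hZrw]
    calc Y = Y * (X * Z) := by rw [hXZ, mul_one]
      _ = (Y * X) * Z := by rw [mul_assoc]
      _ = Z := by rw [h2, one_mul]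
  · intro hD
    have hYZ : Y = Z := by rw [hYrw, hZrw, hD]
    constructor
    · rw [hYZ]; exact hXZ
    · rw [hYZ]; exact hZX

lemma contractL_nat (f : Module.Dual k A) (u : A →ₗ[k] A) (z : A ⊗[k] A) :
    u (contractL k A f z) = contractL k A f (TensorProduct.map LinearMap.id u z) := by
  induction z using TensorProduct.induction_on with
  | zero => simp
  | tmul x y => simp [contractL]
  | add a b ha hb => rw [map_add, map_add, ha, hb, map_add, map_add]

lemma contractR_nat (g : Module.Dual k A) (u : A →ₗ[k] A) (z : A ⊗[k] A) :
    u (contractR k A g z) = contractR k A g (TensorProduct.map u LinearMap.id z) := by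
  induction z using TensorProduct.induction_on with
  | zero => simp
  | tmul x y => simp [contractR]
  | add a b ha hb => rw [map_add, map_add, ha, hb, map_add, map_add]

lemma fix_of_min (hmin : Algebra.adjoin k (contractSet k A ρ) = ⊤) (φ : A →ₐ[k] A)
    (h1 : TensorProduct.map (φ : A →ₗ[k] A) LinearMap.id ρ = ρ)
    (h2 : TensorProduct.map LinearMap.id (φ : A →ₗ[k] A) ρ = ρ) :
    ∀ x : A, φ x = x := by
  have hgen : ∀ x ∈ contractSet k A ρ, φ x = x := by
    rintro x ⟨f, g, rfl⟩
    rw [map_add]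
    congr 1
    · rw [show φ (contractL k A f ρ) = (φ : A →ₗ[k] A) (contractL k A f ρ) from rfl,
        contractL_nat, h2]
    · rw [show φ (contractR k A g ρ) = (φ : A →ₗ[k] A) (contractR k A g ρ) from rfl,
        contractR_nat, h1]
  intro x
  have hx : x ∈ Algebra.adjoin k (contractSet k A ρ) := by rw [hmin]; trivial
  induction hx using Algebra.adjoin_induction with
  | mem y hy => exact hgen y hy
  | algebraMap r => exact φ.commutes r
  | add a b ha hb h1 h2 => rw [map_add, h1, h2]
  | mul a b ha hb h1 h2 => rw [map_mul, h1, h2]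

lemma main_forward (hQT : Quasitriangular k A ρ ρinv)
    (hmin : Algebra.adjoin k (contractSet k A ρ) = ⊤) (ht : IsHopfAuto k A t)
    (hT : TensorProduct.map t t ρ = ρ)
    (hD : TensorProduct.map (t ∘ₗ 𝒮) LinearMap.id ρ =
      TensorProduct.map LinearMap.id (𝒮 ∘ₗ t) ρ) :
    (∀ x : A, t (t (𝒮 (𝒮 x))) = x) ∧ (∀ x : A, 𝒮 (𝒮 (t (t x))) = x) := by
  have hst : ∀ x : A, t (𝒮 x) = 𝒮 (t x) := t_antipode ht
  have hcomm : 𝒮 ∘ₗ t = t ∘ₗ 𝒮 := LinearMap.ext fun x => (hst x).symm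
  have hww : TensorProduct.map (t ∘ₗ 𝒮) (t ∘ₗ 𝒮) ρ = ρ := by
    rw [← map_map, antipode_sq_rho hQT, hT]
  have hwid : TensorProduct.map ((t ∘ₗ 𝒮) ∘ₗ (t ∘ₗ 𝒮)) LinearMap.id ρ = ρ := by
    have e1 : TensorProduct.map ((t ∘ₗ 𝒮) ∘ₗ (t ∘ₗ 𝒮)) LinearMap.id ρ =
        TensorProduct.map (t ∘ₗ 𝒮) LinearMap.id
          (TensorProduct.map (t ∘ₗ 𝒮) LinearMap.id ρ) := by
      rw [map_map, LinearMap.id_comp]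
    rw [e1, hD, map_map, LinearMap.comp_id, LinearMap.id_comp, hcomm, hww]
  have hidw : TensorProduct.map LinearMap.id ((t ∘ₗ 𝒮) ∘ₗ (t ∘ₗ 𝒮)) ρ = ρ := by
    have e2 : TensorProduct.map LinearMap.id (t ∘ₗ 𝒮) ρ =
        TensorProduct.map (t ∘ₗ 𝒮) LinearMap.id ρ := by
      rw [← hcomm, ← hD, hcomm]
    have e1 : TensorProduct.map LinearMap.id ((t ∘ₗ 𝒮) ∘ₗ (t ∘ₗ 𝒮)) ρ =
        TensorProduct.map LinearMap.id (t ∘ₗ 𝒮)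
          (TensorProduct.map LinearMap.id (t ∘ₗ 𝒮) ρ) := by
      rw [map_map, LinearMap.id_comp]
    rw [e1, e2, map_map, LinearMap.comp_id, LinearMap.id_comp, hww]
  set φ : A →ₐ[k] A := (tAlg ht).comp ((tAlg ht).comp sSqAlg) with hφ
  have hφapp : ∀ x : A, φ x = (t ∘ₗ 𝒮) ((t ∘ₗ 𝒮) x) := by
    intro x
    show t (t (𝒮 (𝒮 x))) = t (𝒮 (t (𝒮 x)))
    rw [hst (𝒮 x)]
  have hφlin : (φ : A →ₗ[k] A) = (t ∘ₗ 𝒮) ∘ₗ (t ∘ₗ 𝒮) := LinearMap.ext fun x => hφapp x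
  have hfix := fix_of_min hmin φ (by rw [hφlin]; exact hwid) (by rw [hφlin]; exact hidw)
  have hfix' : ∀ x : A, t (t (𝒮 (𝒮 x))) = x := hfix
  refine ⟨hfix', fun x => ?_⟩
  rw [← hst, ← hst, ← hst, ← hst]
  exact hfix' x

lemma main_backward (hQT : Quasitriangular k A ρ ρinv) (ht : IsHopfAuto k A t)
    (hT : TensorProduct.map t t ρ = ρ)
    (h1 : ∀ x : A, t (t (𝒮 (𝒮 x))) = x) :
    TensorProduct.map (t ∘ₗ 𝒮) LinearMap.id ρ =
      TensorProduct.map LinearMap.id (𝒮 ∘ₗ t) ρ := by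
  have e1 : TensorProduct.map (t ∘ₗ 𝒮) LinearMap.id ρ =
      TensorProduct.map ((t ∘ₗ 𝒮) ∘ₗ 𝒮) 𝒮 ρ := by
    conv_lhs => rw [← antipode_sq_rho hQT]
    rw [map_map, LinearMap.id_comp]
  have e2 : (t ∘ₗ 𝒮) ∘ₗ 𝒮 = (((tEquiv ht).symm : A ≃ₗ[k] A) : A →ₗ[k] A) := by
    apply LinearMap.ext
    intro x
    apply ht.bij.injective
    show t (t (𝒮 (𝒮 x))) = t ((tEquiv ht).symm x)
    rw [h1 x, t_tEquiv_symm ht]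
  rw [e1, e2, map_tinv_s_eq ht hT]

end Main

end QTAux

open TensorProduct in
/-- for a minimal quasitriangular Hopf algebra `(A, ρ)` with antipode `s`
and a Hopf algebra automorphism `t` of `A`, `(A, ρ, t)` is a balanced oriented quantum
algebra if and only if `ρ = (t ⊗ t)(ρ)` and `t² = s⁻²`. -/
theorem balanced_iff_sq_eq_antipode_sq_inv {k : Type*} [Field k]
    {A : Type*} [Ring A] [HopfAlgebra k A]
    (ρ ρinv : A ⊗[k] A)
    (hQT : Quasitriangular k A ρ ρinv)
    (hmin : Algebra.adjoin k (contractSet k A ρ) = ⊤)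
    (t : A →ₗ[k] A) (ht : IsHopfAuto k A t) :
    OrientedQA k A ρ ρinv t t ↔
      (TensorProduct.map t t ρ = ρ ∧
        (∀ x : A, t (t (HopfAlgebra.antipode (R := k)
            (HopfAlgebra.antipode (R := k) x))) = x) ∧
        (∀ x : A, HopfAlgebra.antipode (R := k)
            (HopfAlgebra.antipode (R := k) (t (t x))) = x)) := by
  constructor
  · intro hO
    have hT := hO.qa2_d
    have hD := (QTAux.qa1_iff hQT ht hT).mp ⟨hO.qa1_left, hO.qa1_right⟩
    obtain ⟨h1, h2⟩ := QTAux.main_forward hQT hmin ht hT hD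
    exact ⟨hT, h1, h2⟩
  · rintro ⟨hT, h1, h2⟩
    have hD := QTAux.main_backward hQT ht hT h1
    have hpair := (QTAux.qa1_iff hQT ht hT).mpr hD
    exact { td_bij := ht.bij, tu_bij := ht.bij, td_one := ht.map_one, td_mul := ht.map_mul,
            tu_one := ht.map_one, tu_mul := ht.map_mul, comm := fun a => rfl,
            mul_inv := hQT.mul_inv, inv_mul := hQT.inv_mul,
            qa1_left := hpair.1, qa1_right := hpair.2, qa2_d := hT, qa2_u := hT,
            qa3 := QTAux.yangBaxter hQT }
end

section
/- Let k be a field of characteristic not 2, and let A = A_{2,−1} be Sweedler's 4-dimensional Hopf algebra, generated by a, x with a² = 1, x² = 0, xa = −ax. Fix α ∈ k* and let ρ_α = (1/2)(1⊗1 + 1⊗a + a⊗1 − a⊗a) + (α/2)(x⊗x + x⊗ax + ax⊗ax − ax⊗x). If t is an algebra automorphism of A satisfying ρ_α = (t ⊗ t)(ρ_α), then t(a) = a and t(x) = x or t(x) = −x. -/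
open TensorProduct

/-- for Sweedler's 4-dimensional Hopf algebra `A = A_{2,-1}` over a field
of characteristic not 2 (presented by generators `a, x` with `a² = 1`, `x² = 0`,
`xa = -ax` and basis `{1, a, x, ax}`), and `ρ_α` as given with `α ≠ 0`: any algebra
automorphism `t` of `A` with `(t ⊗ t)(ρ_α) = ρ_α` satisfies `t(a) = a` and
`t(x) = x` or `t(x) = -x`. -/
theorem sweedler_auto_fixing_rho {k : Type*} [Field k] (hchar : (2 : k) ≠ 0)
    {A : Type*} [Ring A] [Algebra k A] (a x : A)
    (ha : a * a = 1) (hx : x * x = 0) (hxa : x * a = -(a * x))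
    (hind : LinearIndependent k ![(1 : A), a, x, a * x])
    (hspan : Submodule.span k {(1 : A), a, x, a * x} = ⊤)
    (α : k) (hα : α ≠ 0)
    (ρ : A ⊗[k] A)
    (hρ : ρ = (1 / 2 : k) •
        (1 ⊗ₜ[k] 1 + 1 ⊗ₜ[k] a + a ⊗ₜ[k] 1 - a ⊗ₜ[k] a) +
      (α / 2) •
        (x ⊗ₜ[k] x + x ⊗ₜ[k] (a * x) + (a * x) ⊗ₜ[k] (a * x) - (a * x) ⊗ₜ[k] x))
    (t : A →ₗ[k] A) (htbij : Function.Bijective t)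
    (ht1 : t 1 = 1) (htm : ∀ u v : A, t (u * v) = t u * t v)
    (hfix : TensorProduct.map t t ρ = ρ) :
    t a = a ∧ (t x = x ∨ t x = -x) := by
  -- multiplication table
  have hax : a * (a * x) = x := by rw [← mul_assoc, ha, one_mul]
  have hxa2 : (a * x) * a = -x := by rw [mul_assoc, hxa, mul_neg, hax]
  have hxax : x * (a * x) = 0 := by
    rw [← mul_assoc, hxa, neg_mul, mul_assoc, hx, mul_zero, neg_zero]
  have haxx : (a * x) * x = 0 := by rw [mul_assoc, hx, mul_zero]
  have hax2 : (a * x) * (a * x) = 0 := by rw [mul_assoc, hxax, mul_zero]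
  -- the basis
  have hsp : ⊤ ≤ Submodule.span k (Set.range ![(1 : A), a, x, a * x]) := by
    have hrange : Set.range ![(1 : A), a, x, a * x] = {(1 : A), a, x, a * x} := by
      ext y
      constructor
      · rintro ⟨i, rfl⟩
        fin_cases i <;> simp
      · intro h
        simp only [Set.mem_insert_iff, Set.mem_singleton_iff] at h
        rcases h with rfl | rfl | rfl | rfl
        exacts [⟨0, rfl⟩, ⟨1, rfl⟩, ⟨2, rfl⟩, ⟨3, rfl⟩]
    rw [hrange, hspan]
  set b : Module.Basis (Fin 4) k A := Module.Basis.mk hind hsp with hbdef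
  have hb0 : b 0 = 1 := by rw [hbdef, Module.Basis.mk_apply]; rfl
  have hb1 : b 1 = a := by rw [hbdef, Module.Basis.mk_apply]; rfl
  have hb2 : b 2 = x := by rw [hbdef, Module.Basis.mk_apply]; rfl
  have hb3 : b 3 = a * x := by rw [hbdef, Module.Basis.mk_apply]; rfl
  have hr0 : ∀ i, b.repr 1 i = if (0 : Fin 4) = i then 1 else 0 := by
    intro i; rw [← hb0, b.repr_self, Finsupp.single_apply]
  have hr1 : ∀ i, b.repr a i = if (1 : Fin 4) = i then 1 else 0 := by
    intro i; rw [← hb1, b.repr_self, Finsupp.single_apply]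
  have hr2 : ∀ i, b.repr x i = if (2 : Fin 4) = i then 1 else 0 := by
    intro i; rw [← hb2, b.repr_self, Finsupp.single_apply]
  have hr3 : ∀ i, b.repr (a * x) i = if (3 : Fin 4) = i then 1 else 0 := by
    intro i; rw [← hb3, b.repr_self, Finsupp.single_apply]
  -- expansion of a general element
  have expand : ∀ u : A,
      u = b.repr u 0 • (1 : A) + b.repr u 1 • a + b.repr u 2 • x + b.repr u 3 • (a * x) := by
    intro u
    conv_lhs => rw [← b.sum_repr u]
    rw [Fin.sum_univ_four, hb0, hb1, hb2, hb3]
  -- linear independence, in expanded form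
  have lin : ∀ g0 g1 g2 g3 : k, g0 • (1 : A) + g1 • a + g2 • x + g3 • (a * x) = 0 →
      g0 = 0 ∧ g1 = 0 ∧ g2 = 0 ∧ g3 = 0 := by
    intro g0 g1 g2 g3 hg
    have h := Fintype.linearIndependent_iff.mp hind ![g0, g1, g2, g3] (by
      rw [Fin.sum_univ_four]; simpa using hg)
    exact ⟨by simpa using h 0, by simpa using h 1, by simpa using h 2, by simpa using h 3⟩
  -- the square of a general element
  have sqrep : ∀ u : A, u * u
      = (b.repr u 0 * b.repr u 0 + b.repr u 1 * b.repr u 1) • (1 : A)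
        + (2 * (b.repr u 0 * b.repr u 1)) • a
        + (2 * (b.repr u 0 * b.repr u 2)) • x
        + (2 * (b.repr u 0 * b.repr u 3)) • (a * x) := by
    intro u
    conv_lhs => rw [expand u]
    simp only [mul_add, add_mul, smul_mul_assoc, mul_smul_comm, smul_smul, one_mul, mul_one,
      ha, hx, hxa, hax, hxa2, hxax, haxx, hax2, smul_neg, smul_zero, add_zero, zero_add]
    module
  -- elements of square zero have no component on 1, a
  have sq01 : ∀ u : A, u * u = 0 → b.repr u 0 = 0 ∧ b.repr u 1 = 0 := by
    intro u hu
    rw [sqrep u] at hu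
    obtain ⟨h0, h1, -, -⟩ := lin _ _ _ _ hu
    have hpq : b.repr u 0 * b.repr u 1 = 0 := by
      have h2 : (2 : k) * (b.repr u 0 * b.repr u 1) = 0 := h1
      exact (mul_eq_zero.mp h2).resolve_left hchar
    rcases mul_eq_zero.mp hpq with hp | hq
    · refine ⟨hp, ?_⟩
      have : b.repr u 1 * b.repr u 1 = 0 := by linear_combination h0 - b.repr u 0 * hp
      exact mul_self_eq_zero.mp this
    · refine ⟨?_, hq⟩
      have : b.repr u 0 * b.repr u 0 = 0 := by linear_combination h0 - b.repr u 1 * hq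
      exact mul_self_eq_zero.mp this
  -- apply to t x and t (a*x)
  have htx2 : t x * t x = 0 := by rw [← htm, hx, map_zero]
  have htax2 : t (a * x) * t (a * x) = 0 := by rw [← htm, hax2, map_zero]
  obtain ⟨hd0, hd1⟩ := sq01 _ htx2
  obtain ⟨hf0, hf1⟩ := sq01 _ htax2
  -- (t a)^2 = 1 gives c0 * c1 = 0
  have hta2 : t a * t a = 1 := by rw [← htm, ha, ht1]
  have hc01 : b.repr (t a) 0 * b.repr (t a) 1 = 0 := by
    have h := hta2
    rw [sqrep (t a)] at h
    have h' : (b.repr (t a) 0 * b.repr (t a) 0 + b.repr (t a) 1 * b.repr (t a) 1 - 1) • (1 : A)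
        + (2 * (b.repr (t a) 0 * b.repr (t a) 1)) • a
        + (2 * (b.repr (t a) 0 * b.repr (t a) 2)) • x
        + (2 * (b.repr (t a) 0 * b.repr (t a) 3)) • (a * x) = 0 := by
      linear_combination (norm := module) h
    obtain ⟨-, h1, -, -⟩ := lin _ _ _ _ h'
    exact (mul_eq_zero.mp h1).resolve_left hchar
  -- tensor coordinate equations
  have tens : ∀ i j : Fin 4,
      (1 / 2 : k) * (b.repr 1 i * b.repr 1 j + b.repr 1 i * b.repr (t a) j
        + b.repr (t a) i * b.repr 1 j - b.repr (t a) i * b.repr (t a) j)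
      + (α / 2) * (b.repr (t x) i * b.repr (t x) j + b.repr (t x) i * b.repr (t (a * x)) j
        + b.repr (t (a * x)) i * b.repr (t (a * x)) j - b.repr (t (a * x)) i * b.repr (t x) j)
    = (1 / 2 : k) * (b.repr 1 i * b.repr 1 j + b.repr 1 i * b.repr a j
        + b.repr a i * b.repr 1 j - b.repr a i * b.repr a j)
      + (α / 2) * (b.repr x i * b.repr x j + b.repr x i * b.repr (a * x) j
        + b.repr (a * x) i * b.repr (a * x) j - b.repr (a * x) i * b.repr x j) := by
    intro i j
    have h := congrArg (fun z => (b.tensorProduct b).repr z (i, j)) hfix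
    simp only [hρ, map_add, map_sub, map_smul, TensorProduct.map_tmul, ht1,
      Finsupp.add_apply, Finsupp.sub_apply, Finsupp.smul_apply,
      Module.Basis.tensorProduct_repr_tmul_apply, smul_eq_mul] at h
    linear_combination h
  -- compute t a
  have h11 := tens 1 1
  have h01 := tens 0 1
  have h02 := tens 0 2
  have h03 := tens 0 3
  simp only [hr0, hr1, hr2, hr3, hd0, hd1, hf0, hf1] at h11 h01 h02 h03
  simp only [Fin.isValue, show ((2:Fin 4)=1)=False by simp, show ((3:Fin 4)=1)=False by simp, show ((2:Fin 4)=0)=False by simp, show ((3:Fin 4)=0)=False by simp, show ((0:Fin 4)=1)=False by simp, show ((1:Fin 4)=1)=True by simp, show ((0:Fin 4)=0)=True by simp, show ((1:Fin 4)=0)=False by simp, show ((0:Fin 4)=2)=False by simp, show ((1:Fin 4)=2)=False by simp, show ((2:Fin 4)=2)=True by simp, show ((3:Fin 4)=2)=False by simp, show ((0:Fin 4)=3)=False by simp, show ((1:Fin 4)=3)=False by simp, show ((2:Fin 4)=3)=False by simp, show ((3:Fin 4)=3)=True by simp, if_true, if_false, mul_zero, zero_mul, mul_one, one_mul, add_zero,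 zero_add, sub_zero, zero_sub, mul_neg, neg_zero] at h11 h01 h02 h03
  field_simp [hchar] at h11 h01 h02 h03
  have hc1 : b.repr (t a) 1 = 1 := by linear_combination h01 + hc01
  have hc0 : b.repr (t a) 0 = 0 := by
    have h := hc01; rw [hc1, mul_one] at h; exact h
  have hc2 : b.repr (t a) 2 = 0 := by linear_combination h02 + b.repr (t a) 2 * hc0
  have hc3 : b.repr (t a) 3 = 0 := by linear_combination h03 + b.repr (t a) 3 * hc0
  have htaa : t a = a := by
    conv_lhs => rw [expand (t a)]
    rw [hc0, hc1, hc2, hc3]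
    simp
  have htxe : t x = b.repr (t x) 2 • x + b.repr (t x) 3 • (a * x) := by
    conv_lhs => rw [expand (t x)]
    rw [hd0, hd1]
    simp
  have htaxe : t (a * x) = b.repr (t x) 3 • x + b.repr (t x) 2 • (a * x) := by
    rw [htm, htaa]
    conv_lhs => rw [htxe]
    rw [mul_add, mul_smul_comm, mul_smul_comm, hax]
    abel
  have hf2 : b.repr (t (a * x)) 2 = b.repr (t x) 3 := by
    rw [htaxe]; simp [hr2, hr3]
  have hf3 : b.repr (t (a * x)) 3 = b.repr (t x) 2 := by
    rw [htaxe]; simp [hr2, hr3]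
  have h22 := tens 2 2
  have h23 := tens 2 3
  have h32 := tens 3 2
  rw [htaa] at h22 h23 h32
  simp only [hr0, hr1, hr2, hr3, hf2, hf3,
    show ((2:Fin 4)=1)=False by simp, show ((3:Fin 4)=1)=False by simp,
    show ((2:Fin 4)=0)=False by simp, show ((3:Fin 4)=0)=False by simp,
    show ((0:Fin 4)=1)=False by simp, show ((1:Fin 4)=1)=True by simp,
    show ((0:Fin 4)=0)=True by simp, show ((1:Fin 4)=0)=False by simp,
    show ((0:Fin 4)=2)=False by simp, show ((1:Fin 4)=2)=False by simp,
    show ((2:Fin 4)=2)=True by simp, show ((3:Fin 4)=2)=False by simp,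
    show ((0:Fin 4)=3)=False by simp, show ((1:Fin 4)=3)=False by simp,
    show ((2:Fin 4)=3)=False by simp, show ((3:Fin 4)=3)=True by simp,
    if_true, if_false, mul_zero, zero_mul, mul_one, one_mul, add_zero, zero_add,
    sub_zero, zero_sub, mul_neg, neg_zero] at h22 h23 h32
  field_simp [hchar, hα] at h22 h23 h32
  have h32' : 2 * (b.repr (t x) 3 * b.repr (t x) 2) + b.repr (t x) 3 * b.repr (t x) 3
      - b.repr (t x) 2 * b.repr (t x) 2 = -1 :=
    mul_left_cancel₀ hα (by linear_combination α * h32)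
  have h4 : (2 : k) * ((2 : k) * (b.repr (t x) 3 * b.repr (t x) 3)) = 0 := by
    linear_combination 2 * h22 - h23 + h32'
  have hq : b.repr (t x) 3 = 0 :=
    mul_self_eq_zero.mp (((mul_eq_zero.mp ((mul_eq_zero.mp h4).resolve_left hchar)).resolve_left hchar))
  have hp2 : b.repr (t x) 2 * b.repr (t x) 2 = 1 := by
    linear_combination h22 - b.repr (t x) 3 * hq
  refine ⟨htaa, ?_⟩
  rcases mul_self_eq_one_iff.mp hp2 with hp | hp
  · left
    rw [htxe, hq, hp, one_smul, zero_smul, add_zero]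
  · right
    rw [htxe, hq, hp, zero_smul, add_zero, neg_smul, one_smul]
end

section
/- Let A be an algebra over k and suppose ρ ∈ A ⊗ A and t_d, t_u are linear automorphisms of A with t_d ⊗ t_d and t_u ⊗ t_u fixing ρ, where ρ is invertible in A ⊗ A. Then ρ⁻¹ is also fixed: ρ⁻¹ = (t_d ⊗ t_d)(ρ⁻¹) = (t_u ⊗ t_u)(ρ⁻¹). Consequently, if (A, ρ, t_d, t_u) is an oriented quantum algebra, then (A, ρ⁻¹, t_d⁻¹, t_u⁻¹) is an oriented quantum algebra over k. -/
open TensorProduct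

section Aux

private lemma tmap_tmap {k : Type*} [CommSemiring k]
    {M N P Q U V : Type*} [AddCommMonoid M] [AddCommMonoid N] [AddCommMonoid P]
    [AddCommMonoid Q] [AddCommMonoid U] [AddCommMonoid V]
    [Module k M] [Module k N] [Module k P] [Module k Q] [Module k U] [Module k V]
    (f : P →ₗ[k] U) (g : Q →ₗ[k] V) (f' : M →ₗ[k] P) (g' : N →ₗ[k] Q) (x : M ⊗[k] N) :
    TensorProduct.map f g (TensorProduct.map f' g' x) =
      TensorProduct.map (f ∘ₗ f') (g ∘ₗ g') x := by
  rw [← LinearMap.comp_apply, ← TensorProduct.map_comp]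

end Aux

open TensorProduct in
/-- if `t_d ⊗ t_d` and `t_u ⊗ t_u` fix the invertible `ρ` (with `t_d, t_u`
algebra automorphisms), then they fix `ρ⁻¹`; consequently if `(A, ρ, t_d, t_u)` is an
oriented quantum algebra, so is `(A, ρ⁻¹, t_d⁻¹, t_u⁻¹)`. -/
theorem inverse_oriented_quantum_algebra {k : Type*} [Field k]
    {A : Type*} [Ring A] [Algebra k A]
    (ρ ρinv : A ⊗[k] A) (td tu : A ≃ₗ[k] A)
    (htd1 : td 1 = 1) (htdm : ∀ a b : A, td (a * b) = td a * td b)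
    (htu1 : tu 1 = 1) (htum : ∀ a b : A, tu (a * b) = tu a * tu b)
    (hmi : ρ * ρinv = 1) (him : ρinv * ρ = 1)
    (h2d : TensorProduct.map td.toLinearMap td.toLinearMap ρ = ρ)
    (h2u : TensorProduct.map tu.toLinearMap tu.toLinearMap ρ = ρ) :
    (TensorProduct.map td.toLinearMap td.toLinearMap ρinv = ρinv ∧
        TensorProduct.map tu.toLinearMap tu.toLinearMap ρinv = ρinv) ∧
      (OrientedQA k A ρ ρinv td.toLinearMap tu.toLinearMap →
        OrientedQA k A ρinv ρ td.symm.toLinearMap tu.symm.toLinearMap) := by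
  classical
  set td' : A ≃ₐ[k] A := AlgEquiv.ofLinearEquiv td htd1 htdm with htd'
  set tu' : A ≃ₐ[k] A := AlgEquiv.ofLinearEquiv tu htu1 htum with htu'
  -- Part 1 : t ⊗ t fixes ρinv whenever it is an algebra map fixing ρ
  have fix_inv : ∀ (t : A →ₐ[k] A),
      TensorProduct.map t.toLinearMap t.toLinearMap ρ = ρ →
      TensorProduct.map t.toLinearMap t.toLinearMap ρinv = ρinv := by
    intro t hfix
    have hT : ∀ x : A ⊗[k] A, Algebra.TensorProduct.map t t x =
        TensorProduct.map t.toLinearMap t.toLinearMap x := fun _ => rfl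
    have h1 : Algebra.TensorProduct.map t t ρinv * ρ = 1 := by
      conv_lhs => rw [← hfix, ← hT, ← map_mul, him, map_one]
    calc TensorProduct.map t.toLinearMap t.toLinearMap ρinv
        = Algebra.TensorProduct.map t t ρinv * (ρ * ρinv) := by rw [hmi, mul_one, hT]
      _ = (Algebra.TensorProduct.map t t ρinv * ρ) * ρinv := (mul_assoc _ _ _).symm
      _ = ρinv := by rw [h1, one_mul]
  have part1d : TensorProduct.map td.toLinearMap td.toLinearMap ρinv = ρinv :=
    fix_inv td'.toAlgHom h2d
  have part1u : TensorProduct.map tu.toLinearMap tu.toLinearMap ρinv = ρinv :=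
    fix_inv tu'.toAlgHom h2u
  refine ⟨⟨part1d, part1u⟩, fun h => ?_⟩
  have hcomm : ∀ a : A, td (tu a) = tu (td a) := h.comm
  -- cancel lemma
  have cancel : ∀ (e : A ≃ₗ[k] A) (x : A ⊗[k] A),
      TensorProduct.map e.symm.toLinearMap e.symm.toLinearMap
        (TensorProduct.map e.toLinearMap e.toLinearMap x) = x := by
    intro e x
    rw [tmap_tmap]
    have : e.symm.toLinearMap ∘ₗ e.toLinearMap = LinearMap.id := by ext a; simp
    rw [this, TensorProduct.map_id, LinearMap.id_apply]
  -- the twisting automorphism θ = tu ∘ td⁻¹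
  set θ : A →ₐ[k] A := tu'.toAlgHom.comp td'.symm.toAlgHom with hθ
  have hθapp : ∀ a : A, θ a = tu (td.symm a) := fun _ => rfl
  set F : A ⊗[k] Aᵐᵒᵖ →ₐ[k] A ⊗[k] Aᵐᵒᵖ :=
    Algebra.TensorProduct.map θ (AlgHom.id k Aᵐᵒᵖ) with hFdef
  have hF : ∀ x : A ⊗[k] Aᵐᵒᵖ, F x =
      TensorProduct.map θ.toLinearMap LinearMap.id x := fun _ => rfl
  set op : A →ₗ[k] Aᵐᵒᵖ := (MulOpposite.opLinearEquiv k).toLinearMap with hop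
  have hΦ : ∀ (f g : A →ₗ[k] A) (x : A ⊗[k] A),
      toOpTensor k A (TensorProduct.map f g x) = TensorProduct.map f (op ∘ₗ g) x := by
    intro f g x
    show TensorProduct.map LinearMap.id op (TensorProduct.map f g x) = _
    rw [tmap_tmap, LinearMap.id_comp]
  -- key transported identities
  have hFX : F (toOpTensor k A (TensorProduct.map LinearMap.id tu.toLinearMap ρ)) =
      toOpTensor k A (TensorProduct.map td.symm.toLinearMap LinearMap.id ρ) := by
    rw [hΦ, hΦ, hF, tmap_tmap, LinearMap.id_comp, LinearMap.comp_id]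
    have e1 : θ.toLinearMap = td.symm.toLinearMap ∘ₗ tu.toLinearMap := by
      ext a
      simp only [LinearMap.comp_apply, AlgHom.toLinearMap_apply, LinearEquiv.coe_coe, hθapp]
      apply td.injective
      rw [hcomm, td.apply_symm_apply, td.apply_symm_apply]
    have e2 : op ∘ₗ tu.toLinearMap = (op ∘ₗ LinearMap.id) ∘ₗ tu.toLinearMap := by
      rw [LinearMap.comp_id]
    rw [e1, e2, ← tmap_tmap, h2u]
  have hFY : F (toOpTensor k A (TensorProduct.map td.toLinearMap LinearMap.id ρinv)) =
      toOpTensor k A (TensorProduct.map LinearMap.id tu.symm.toLinearMap ρinv) := by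
    rw [hΦ, hΦ, hF, tmap_tmap, LinearMap.comp_id, LinearMap.id_comp]
    have e1 : θ.toLinearMap ∘ₗ td.toLinearMap = LinearMap.id ∘ₗ tu.toLinearMap := by
      ext a
      simp [hθapp]
    have e3 : (op ∘ₗ tu.symm.toLinearMap) ∘ₗ tu.toLinearMap = op := by
      ext a; simp
    rw [e1]
    conv_rhs => rw [← part1u, tmap_tmap, e3]
  -- Yang–Baxter for ρinv via units
  have unit_pair : ∀ (G : A ⊗[k] A →ₐ[k] A ⊗[k] (A ⊗[k] A)),
      G ρ * G ρinv = 1 ∧ G ρinv * G ρ = 1 := by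
    intro G
    constructor
    · rw [← map_mul, hmi, map_one]
    · rw [← map_mul, him, map_one]
  have qa3' : YangBaxter k A ρinv := by
    let u12 : (A ⊗[k] (A ⊗[k] A))ˣ :=
      ⟨rho12 k A ρ, rho12 k A ρinv, (unit_pair _).1, (unit_pair _).2⟩
    let u13 : (A ⊗[k] (A ⊗[k] A))ˣ :=
      ⟨rho13 k A ρ, rho13 k A ρinv, (unit_pair _).1, (unit_pair _).2⟩
    let u23 : (A ⊗[k] (A ⊗[k] A))ˣ :=
      ⟨rho23 k A ρ, rho23 k A ρinv, (unit_pair _).1, (unit_pair _).2⟩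
    have hU : u12 * u13 * u23 = u23 * u13 * u12 := Units.ext h.qa3
    have hinv : u12⁻¹ * u13⁻¹ * u23⁻¹ = u23⁻¹ * u13⁻¹ * u12⁻¹ := by
      have := congrArg (·⁻¹) hU
      simp only [mul_inv_rev, ← mul_assoc] at this
      exact this.symm
    exact congrArg Units.val hinv
  -- assemble the structure
  refine ⟨td.symm.bijective, tu.symm.bijective, ?_, ?_, ?_, ?_, ?_, him, hmi, ?_, ?_, ?_, ?_, qa3'⟩
  · show td.symm 1 = 1
    apply td.injective; rw [td.apply_symm_apply, htd1]
  · intro a b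
    show td.symm (a * b) = td.symm a * td.symm b
    apply td.injective
    rw [td.apply_symm_apply, htdm, td.apply_symm_apply, td.apply_symm_apply]
  · show tu.symm 1 = 1
    apply tu.injective; rw [tu.apply_symm_apply, htu1]
  · intro a b
    show tu.symm (a * b) = tu.symm a * tu.symm b
    apply tu.injective
    rw [tu.apply_symm_apply, htum, tu.apply_symm_apply, tu.apply_symm_apply]
  · intro a
    show td.symm (tu.symm a) = tu.symm (td.symm a)
    apply tu.injective; apply td.injective
    have l1 : td (tu (td.symm (tu.symm a))) = a := by
      rw [hcomm, td.apply_symm_apply, tu.apply_symm_apply]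
    have l2 : td (tu (tu.symm (td.symm a))) = a := by
      rw [tu.apply_symm_apply, td.apply_symm_apply]
    exact l1.trans l2.symm
  · -- qa1_left for the new data
    rw [← hFY, ← hFX, ← map_mul, h.qa1_right, map_one]
  · -- qa1_right
    rw [← hFX, ← hFY, ← map_mul, h.qa1_left, map_one]
  · -- qa2_d
    conv_lhs => rw [← part1d]
    exact cancel td ρinv
  · -- qa2_u
    conv_lhs => rw [← part1u]
    exact cancel tu ρinv
end

section
/- Let (A, ρ, t_d, t_u) and (A′, ρ′, t_d′, t_u′) be oriented quantum algebras over k, with ρ = Σᵢ aᵢ ⊗ bᵢ and ρ′ = Σ_{i′} a′_{i′} ⊗ b′_{i′}. Then (A ⊗ A′, ρ″, t_d ⊗ t_d′, t_u ⊗ t_u′) is an oriented quantum algebra over k, where ρ″ = Σᵢ Σ_{i′} (aᵢ ⊗ a′_{i′}) ⊗ (bᵢ ⊗ b′_{i′}) ∈ (A ⊗ A′) ⊗ (A ⊗ A′). -/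
open TensorProduct

section Aux

open TensorProduct

variable {k : Type*} [Field k] {A : Type*} [Ring A] [Algebra k A]
  {A' : Type*} [Ring A'] [Algebra k A']

/-- The middle-swap as an algebra equivalence. -/
noncomputable def psiAlg (k : Type*) [Field k] (A : Type*) [Ring A] [Algebra k A]
    (A' : Type*) [Ring A'] [Algebra k A'] :
    (A ⊗[k] A) ⊗[k] (A' ⊗[k] A') ≃ₐ[k] (A ⊗[k] A') ⊗[k] (A ⊗[k] A') :=
  Algebra.TensorProduct.tensorTensorTensorComm k k k k A A A' A'

lemma psi_eq' : ((TensorProduct.tensorTensorTensorComm k A A A' A').toLinearMap :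
      (A ⊗[k] A) ⊗[k] (A' ⊗[k] A') →ₗ[k] (A ⊗[k] A') ⊗[k] (A ⊗[k] A')) =
    (psiAlg k A A').toLinearMap :=
  TensorProduct.ext_fourfold' fun a b a' b' => by simp [psiAlg]

lemma psi_eq (x : (A ⊗[k] A) ⊗[k] (A' ⊗[k] A')) :
    TensorProduct.tensorTensorTensorComm k A A A' A' x = psiAlg k A A' x :=
  DFunLike.congr_fun psi_eq' x

lemma psi_natural (f g : A →ₗ[k] A) (f' g' : A' →ₗ[k] A')
    (x : (A ⊗[k] A) ⊗[k] (A' ⊗[k] A')) :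
    TensorProduct.map (TensorProduct.map f f') (TensorProduct.map g g')
      (TensorProduct.tensorTensorTensorComm k A A A' A' x) =
    TensorProduct.tensorTensorTensorComm k A A A' A'
      (TensorProduct.map (TensorProduct.map f g) (TensorProduct.map f' g') x) := by
  refine DFunLike.congr_fun
    (TensorProduct.ext_fourfold'
      (φ := (TensorProduct.map (TensorProduct.map f f') (TensorProduct.map g g')) ∘ₗ
        (TensorProduct.tensorTensorTensorComm k A A A' A').toLinearMap)
      (ψ := (TensorProduct.tensorTensorTensorComm k A A A' A').toLinearMap ∘ₗ
        TensorProduct.map (TensorProduct.map f g) (TensorProduct.map f' g'))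
      fun a b a' b' => by simp) x

/-- The comparison equivalence for the QA1 axiom. -/
noncomputable def thetaAlg (k : Type*) [Field k] (A : Type*) [Ring A] [Algebra k A]
    (A' : Type*) [Ring A'] [Algebra k A'] :
    (A ⊗[k] Aᵐᵒᵖ) ⊗[k] (A' ⊗[k] A'ᵐᵒᵖ) ≃ₐ[k] (A ⊗[k] A') ⊗[k] (A ⊗[k] A')ᵐᵒᵖ :=
  (Algebra.TensorProduct.tensorTensorTensorComm k k k k A Aᵐᵒᵖ A' A'ᵐᵒᵖ).trans
    (Algebra.TensorProduct.congr AlgEquiv.refl (Algebra.TensorProduct.opAlgEquiv k k A A'))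

lemma theta_nat (u : A →ₗ[k] A) (v : A →ₗ[k] A) (u' : A' →ₗ[k] A') (v' : A' →ₗ[k] A')
    (x : (A ⊗[k] A) ⊗[k] (A' ⊗[k] A')) :
    toOpTensor k (A ⊗[k] A')
      (TensorProduct.map (TensorProduct.map u u') (TensorProduct.map v v')
        (TensorProduct.tensorTensorTensorComm k A A A' A' x)) =
    thetaAlg k A A'
      (TensorProduct.map
        ((toOpTensor k A) ∘ₗ TensorProduct.map u v)
        ((toOpTensor k A') ∘ₗ TensorProduct.map u' v') x) := by
  refine DFunLike.congr_fun
    (TensorProduct.ext_fourfold'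
      (φ := (toOpTensor k (A ⊗[k] A')) ∘ₗ
        (TensorProduct.map (TensorProduct.map u u') (TensorProduct.map v v')) ∘ₗ
        (TensorProduct.tensorTensorTensorComm k A A A' A').toLinearMap)
      (ψ := (thetaAlg k A A').toLinearMap ∘ₗ
        TensorProduct.map
          ((toOpTensor k A) ∘ₗ TensorProduct.map u v)
          ((toOpTensor k A') ∘ₗ TensorProduct.map u' v'))
      fun a b a' b' => by
        simp only [LinearMap.comp_apply, LinearEquiv.coe_coe, AlgEquiv.toLinearMap_apply,
          TensorProduct.map_tmul, TensorProduct.tensorTensorTensorComm_tmul, toOpTensor,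
          LinearMap.id_coe, id_eq, MulOpposite.coe_opLinearEquiv, thetaAlg, AlgEquiv.trans_apply,
          Algebra.TensorProduct.tensorTensorTensorComm_tmul, Algebra.TensorProduct.congr_apply,
          AlgEquiv.coe_refl, Algebra.TensorProduct.map_tmul, AlgHom.coe_id, id,
          Algebra.TensorProduct.opAlgEquiv_tmul]
        rfl) x

/-- The comparison equivalence for Yang–Baxter. -/
noncomputable def phiAlg (k : Type*) [Field k] (A : Type*) [Ring A] [Algebra k A]
    (A' : Type*) [Ring A'] [Algebra k A'] :
    (A ⊗[k] (A ⊗[k] A)) ⊗[k] (A' ⊗[k] (A' ⊗[k] A')) ≃ₐ[k]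
      (A ⊗[k] A') ⊗[k] ((A ⊗[k] A') ⊗[k] (A ⊗[k] A')) :=
  (Algebra.TensorProduct.tensorTensorTensorComm k k k k A (A ⊗[k] A) A' (A' ⊗[k] A')).trans
    (Algebra.TensorProduct.congr AlgEquiv.refl
      (Algebra.TensorProduct.tensorTensorTensorComm k k k k A A A' A'))

lemma rho12_psi (x : (A ⊗[k] A) ⊗[k] (A' ⊗[k] A')) :
    rho12 k (A ⊗[k] A') (TensorProduct.tensorTensorTensorComm k A A A' A' x) =
    phiAlg k A A' (Algebra.TensorProduct.map (rho12 k A) (rho12 k A') x) := by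
  refine DFunLike.congr_fun
    (TensorProduct.ext_fourfold'
      (φ := (rho12 k (A ⊗[k] A')).toLinearMap ∘ₗ
        (TensorProduct.tensorTensorTensorComm k A A A' A').toLinearMap)
      (ψ := (phiAlg k A A').toLinearMap ∘ₗ
        (Algebra.TensorProduct.map (rho12 k A) (rho12 k A')).toLinearMap)
      fun a b a' b' => by simp [rho12, phiAlg, Algebra.TensorProduct.one_def]) x

lemma rho13_psi (x : (A ⊗[k] A) ⊗[k] (A' ⊗[k] A')) :
    rho13 k (A ⊗[k] A') (TensorProduct.tensorTensorTensorComm k A A A' A' x) =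
    phiAlg k A A' (Algebra.TensorProduct.map (rho13 k A) (rho13 k A') x) := by
  refine DFunLike.congr_fun
    (TensorProduct.ext_fourfold'
      (φ := (rho13 k (A ⊗[k] A')).toLinearMap ∘ₗ
        (TensorProduct.tensorTensorTensorComm k A A A' A').toLinearMap)
      (ψ := (phiAlg k A A').toLinearMap ∘ₗ
        (Algebra.TensorProduct.map (rho13 k A) (rho13 k A')).toLinearMap)
      fun a b a' b' => by simp [rho13, phiAlg, Algebra.TensorProduct.one_def]) x

lemma rho23_psi (x : (A ⊗[k] A) ⊗[k] (A' ⊗[k] A')) :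
    rho23 k (A ⊗[k] A') (TensorProduct.tensorTensorTensorComm k A A A' A' x) =
    phiAlg k A A' (Algebra.TensorProduct.map (rho23 k A) (rho23 k A') x) := by
  refine DFunLike.congr_fun
    (TensorProduct.ext_fourfold'
      (φ := (rho23 k (A ⊗[k] A')).toLinearMap ∘ₗ
        (TensorProduct.tensorTensorTensorComm k A A A' A').toLinearMap)
      (ψ := (phiAlg k A A').toLinearMap ∘ₗ
        (Algebra.TensorProduct.map (rho23 k A) (rho23 k A')).toLinearMap)
      fun a b a' b' => by simp [rho23, phiAlg, Algebra.TensorProduct.one_def]) x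

end Aux

set_option maxHeartbeats 2000000 in
set_option synthInstance.maxHeartbeats 400000 in
open TensorProduct in
/-- the tensor product of two oriented quantum algebras is an oriented
quantum algebra, with `ρ''` the middle-swap of `ρ ⊗ ρ'`. -/
theorem tensor_oriented_quantum_algebra {k : Type*} [Field k]
    {A : Type*} [Ring A] [Algebra k A] {A' : Type*} [Ring A'] [Algebra k A']
    (ρ ρinv : A ⊗[k] A) (td tu : A →ₗ[k] A)
    (ρ' ρinv' : A' ⊗[k] A') (td' tu' : A' →ₗ[k] A')
    (h : OrientedQA k A ρ ρinv td tu) (h' : OrientedQA k A' ρ' ρinv' td' tu') :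
    OrientedQA k (A ⊗[k] A')
      (TensorProduct.tensorTensorTensorComm k A A A' A' (ρ ⊗ₜ[k] ρ'))
      (TensorProduct.tensorTensorTensorComm k A A A' A' (ρinv ⊗ₜ[k] ρinv'))
      (TensorProduct.map td td') (TensorProduct.map tu tu') := by
  obtain ⟨td_bij, tu_bij, td_one, td_mul, tu_one, tu_mul, comm, mul_inv, inv_mul,
    qa1l, qa1r, qa2d, qa2u, qa3⟩ := h
  obtain ⟨td_bij', tu_bij', td_one', td_mul', tu_one', tu_mul', comm', mul_inv', inv_mul',
    qa1l', qa1r', qa2d', qa2u', qa3'⟩ := h'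
  have hT : TensorProduct.map td td' =
      (Algebra.TensorProduct.map (AlgHom.ofLinearMap td td_one td_mul)
        (AlgHom.ofLinearMap td' td_one' td_mul')).toLinearMap :=
    TensorProduct.ext' fun a b => by simp
  have hU : TensorProduct.map tu tu' =
      (Algebra.TensorProduct.map (AlgHom.ofLinearMap tu tu_one tu_mul)
        (AlgHom.ofLinearMap tu' tu_one' tu_mul')).toLinearMap :=
    TensorProduct.ext' fun a b => by simp
  have e1 : td ∘ₗ tu = tu ∘ₗ td := LinearMap.ext comm
  have e1' : td' ∘ₗ tu' = tu' ∘ₗ td' := LinearMap.ext comm'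
  have hid : (LinearMap.id : A ⊗[k] A' →ₗ[k] A ⊗[k] A') =
      TensorProduct.map LinearMap.id LinearMap.id := (TensorProduct.map_id).symm
  constructor
  · -- td bijective
    have : TensorProduct.map td td' =
        (TensorProduct.congr (LinearEquiv.ofBijective td td_bij)
          (LinearEquiv.ofBijective td' td_bij')).toLinearMap := rfl
    rw [this]
    exact (TensorProduct.congr _ _).bijective
  · have : TensorProduct.map tu tu' =
        (TensorProduct.congr (LinearEquiv.ofBijective tu tu_bij)
          (LinearEquiv.ofBijective tu' tu_bij')).toLinearMap := rfl
    rw [this]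
    exact (TensorProduct.congr _ _).bijective
  · rw [hT]; simp only [AlgHom.toLinearMap_apply]; exact map_one _
  · intro a b; rw [hT]; simp only [AlgHom.toLinearMap_apply]; exact map_mul _ a b
  · rw [hU]; simp only [AlgHom.toLinearMap_apply]; exact map_one _
  · intro a b; rw [hU]; simp only [AlgHom.toLinearMap_apply]; exact map_mul _ a b
  · intro x
    calc TensorProduct.map td td' (TensorProduct.map tu tu' x)
        = TensorProduct.map (td ∘ₗ tu) (td' ∘ₗ tu') x := by
          rw [TensorProduct.map_comp]; rfl
      _ = TensorProduct.map (tu ∘ₗ td) (tu' ∘ₗ td') x := by rw [e1, e1']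
      _ = TensorProduct.map tu tu' (TensorProduct.map td td' x) := by
          rw [TensorProduct.map_comp]; rfl
  · rw [psi_eq, psi_eq, ← map_mul, Algebra.TensorProduct.tmul_mul_tmul, mul_inv, mul_inv',
      ← Algebra.TensorProduct.one_def, map_one]
  · rw [psi_eq, psi_eq, ← map_mul, Algebra.TensorProduct.tmul_mul_tmul, inv_mul, inv_mul',
      ← Algebra.TensorProduct.one_def, map_one]
  · rw [hid, theta_nat, theta_nat, TensorProduct.map_tmul, TensorProduct.map_tmul, ← _root_.map_mul (thetaAlg k A A'),
      Algebra.TensorProduct.tmul_mul_tmul]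
    simp only [LinearMap.comp_apply]
    rw [qa1l, qa1l', ← Algebra.TensorProduct.one_def, map_one]
  · rw [hid, theta_nat, theta_nat, TensorProduct.map_tmul, TensorProduct.map_tmul, ← _root_.map_mul (thetaAlg k A A'),
      Algebra.TensorProduct.tmul_mul_tmul]
    simp only [LinearMap.comp_apply]
    rw [qa1r, qa1r', ← Algebra.TensorProduct.one_def, map_one]
  · rw [psi_natural, TensorProduct.map_tmul, qa2d, qa2d']
  · rw [psi_natural, TensorProduct.map_tmul, qa2u, qa2u']
  · unfold YangBaxter at qa3 qa3' ⊢
    rw [rho12_psi, rho13_psi, rho23_psi, ← map_mul, ← map_mul, ← map_mul, ← map_mul]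
    simp only [Algebra.TensorProduct.map_tmul, Algebra.TensorProduct.tmul_mul_tmul]
    rw [qa3, qa3']
end
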